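/- arXiv:2207.03793 — 4 statements merged into one kernel-verified Lean document; each statement's English description precedes it below -/
import Mathlib

section
/- Let G be an edge-colored graph. Suppose that for each vertex v of G there exist a vertex v' and two internally vertex-disjoint PC paths P and Q from v to v' such that the first edge of P at v and the first edge of Q at v have distinct colors (i.e., ch(P) = [v, α_1, β_1, v'], ch(Q) = [v, α_2, β_2, v'] with α_1 ≠ α_2). Then G contains a properly colored cycle. -/
/-- `IsPCPath G col l`: the list of vertices `l` is a properly colored (PC) path in the
edge-colored graph `(G, col)`: it is nonempty, has no repeated vertices, consecutive
vertices are adjacent in `G`, and every two consecutive edges have distinct colors. -/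
def IsPCPath {V γ : Type*} (G : SimpleGraph V) (col : V → V → γ) (l : List V) : Prop :=
  l ≠ [] ∧ l.Nodup ∧ l.Chain' G.Adj ∧
    ∀ a b c : V, [a, b, c] <:+: l → col a b ≠ col b c

/-- `IsPCCycle G col l`: the list of vertices `l` is a properly colored (PC) cycle in the
edge-colored graph `(G, col)`: it has at least 3 distinct vertices, cyclically consecutive
vertices are adjacent in `G`, and every two cyclically consecutive edges (including at the
vertex where the cycle closes) have distinct colors. -/
def IsPCCycle {V γ : Type*} (G : SimpleGraph V) (col : V → V → γ) (l : List V) : Prop :=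
  3 ≤ l.length ∧ l.Nodup ∧ (l ++ l.take 2).Chain' G.Adj ∧
    ∀ a b c : V, [a, b, c] <:+: (l ++ l.take 2) → col a b ≠ col b c

/-- `HasChar col l u x y u'`: the path `l` has character `[u, x, y, u']`, i.e. it starts at
`u` with first edge of color `x` and ends at `u'` with last edge of color `y`. -/
def HasChar {V γ : Type*} (col : V → V → γ) (l : List V) (u : V) (x y : γ) (u' : V) : Prop :=
  (∃ b t, l = u :: b :: t ∧ col u b = x) ∧
  (∃ b t, l.reverse = u' :: b :: t ∧ col u' b = y)

/-- `IsCycleEdge c v v'`: `v` and `v'` are (cyclically) consecutive vertices of the cycle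
represented by the list `c`, i.e. `vv'` is an edge of the cycle. -/
def IsCycleEdge {V : Type*} (c : List V) (v v' : V) : Prop :=
  [v, v'] <:+: (c ++ c.take 1) ∨ [v', v] <:+: (c ++ c.take 1)

namespace PCAux

variable {V γ : Type*} {G : SimpleGraph V} {col : V → V → γ}

/-- index form of the PC color condition -/
def PC3 (col : V → V → γ) (l : List V) : Prop :=
  ∀ (i : ℕ) (h : i + 2 < l.length),
    col (l[i]'(by omega)) (l[i+1]'(by omega)) ≠ col (l[i+1]'(by omega)) (l[i+2]'h)

theorem ge_congr {l : List V} {i j : ℕ} (hij : i = j) {hi : i < l.length} :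
    l[i] = l[j]'(hij ▸ hi) := by cases hij; rfl

theorem triple_infix_iff {l : List V} {a b c : V} :
    [a, b, c] <:+: l ↔ ∃ (i : ℕ) (h : i + 2 < l.length),
      l[i]'(by omega) = a ∧ l[i+1]'(by omega) = b ∧ l[i+2]'h = c := by
  constructor
  · rintro ⟨s, t, rfl⟩
    simp only [List.append_assoc]
    have h : s.length + 2 < (s ++ ([a, b, c] ++ t)).length := by
      simp [List.length_append]
    refine ⟨s.length, h, ?_, ?_, ?_⟩
    · rw [List.getElem_append_right (by omega),
        ge_congr (show s.length - s.length = 0 by omega),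
        List.getElem_append_left (by simp)]
      rfl
    · rw [List.getElem_append_right (by omega),
        ge_congr (show s.length + 1 - s.length = 1 by omega),
        List.getElem_append_left (by simp)]
      rfl
    · rw [List.getElem_append_right (by omega),
        ge_congr (show s.length + 2 - s.length = 2 by omega),
        List.getElem_append_left (by simp)]
      rfl
  · rintro ⟨i, h, rfl, rfl, rfl⟩
    refine ⟨l.take i, l.drop (i + 3), ?_⟩
    have e1 : l.drop i = l[i] :: l.drop (i+1) := List.drop_eq_getElem_cons (by omega)
    have e2 : l.drop (i+1) = l[i+1] :: l.drop (i+2) := List.drop_eq_getElem_cons (by omega)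
    have e3 : l.drop (i+2) = l[i+2] :: l.drop (i+3) := List.drop_eq_getElem_cons (by omega)
    conv_rhs => rw [← List.take_append_drop i l, e1, e2, e3]
    simp

theorem pc3_iff {l : List V} :
    (∀ a b c : V, [a, b, c] <:+: l → col a b ≠ col b c) ↔ PC3 col l := by
  constructor
  · intro H i h
    exact H _ _ _ (triple_infix_iff.mpr ⟨i, h, rfl, rfl, rfl⟩)
  · intro H a b c hin
    obtain ⟨i, h, h1, h2, h3⟩ := triple_infix_iff.mp hin
    subst h1; subst h2; subst h3
    exact H i h

theorem isPCPath_iff {l : List V} :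
    IsPCPath G col l ↔ (l ≠ [] ∧ l.Nodup ∧ l.Chain' G.Adj ∧ PC3 col l) := by
  unfold IsPCPath
  rw [pc3_iff]

/-- The path datum we maintain: a PC path from `s` to `t` with first color `x`
and last color `y` (expressed as `col t (penultimate)`). -/
structure PCP (G : SimpleGraph V) (col : V → V → γ) (ρ : List V) (s t : V) (x y : γ) :
    Prop where
  len : 2 ≤ ρ.length
  nodup : ρ.Nodup
  chain : ρ.Chain' G.Adj
  pc3 : PC3 col ρ
  fst : ρ[0]'(by omega) = s
  lst : ρ[ρ.length - 1]'(by omega) = t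
  fcol : col s (ρ[1]'(by omega)) = x
  lcol : col t (ρ[ρ.length - 2]'(by omega)) = y

theorem chain_getElem {l : List V} (hch : l.Chain' G.Adj) {i : ℕ} (h : i + 1 < l.length) :
    G.Adj (l[i]'(by omega)) (l[i+1]'h) := by
  rw [show l.Chain' G.Adj ↔ l.IsChain G.Adj from Iff.rfl, List.isChain_iff_getElem] at hch
  simpa using hch i (by omega)

theorem chain_of_getElem {l : List V}
    (h : ∀ (i : ℕ) (h : i + 1 < l.length), G.Adj (l[i]'(by omega)) (l[i+1]'h)) :
    l.Chain' G.Adj := by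
  rw [show l.Chain' G.Adj ↔ l.IsChain G.Adj from Iff.rfl, List.isChain_iff_getElem]
  intro i hi
  simpa using h i (by omega)

theorem PCP.isPCPath {ρ : List V} {s t x y} (hp : PCP G col ρ s t x y) :
    IsPCPath G col ρ := by
  obtain ⟨h2, hnd, hch, hpc, -⟩ := hp
  exact isPCPath_iff.mpr ⟨by intro h; simp [h] at h2, hnd, hch, hpc⟩

theorem pcp_of_hasChar {ρ : List V} {s t : V} {x y : γ}
    (hp : IsPCPath G col ρ) (hc : HasChar col ρ s x y t) : PCP G col ρ s t x y := by
  obtain ⟨-, hnd, hch, hpc⟩ := isPCPath_iff.mp hp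
  obtain ⟨⟨b, l, hl, hx⟩, ⟨b', l', hl', hy⟩⟩ := hc
  have h2 : 2 ≤ ρ.length := by simp [hl]
  have hr0 : ρ.reverse[0]'(by simp; omega) = t := by simp [hl']
  have hr1 : ρ.reverse[1]'(by rw [hl']; simp) = b' := by simp [hl']
  rw [List.getElem_reverse] at hr0 hr1
  refine ⟨h2, hnd, hch, hpc, ?_, ?_, ?_, ?_⟩
  · simp [hl]
  · rw [ge_congr (show ρ.length - 1 = ρ.length - 1 - 0 by omega)]
    exact hr0
  · have e1 : ρ[1]'(by omega) = b := by simp [hl]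
    rw [e1]; exact hx
  · rw [ge_congr (show ρ.length - 2 = ρ.length - 1 - 1 by omega), hr1]
    exact hy

theorem PCP.ne {ρ : List V} {s t x y} (hp : PCP G col ρ s t x y) : s ≠ t := by
  obtain ⟨h2, hnd, -, -, h0, hl, -⟩ := hp
  rw [← h0, ← hl]
  intro hcon
  have := (List.Nodup.getElem_inj_iff hnd).mp hcon
  omega

theorem PCP.mem_fst {ρ : List V} {s t x y} (hp : PCP G col ρ s t x y) : s ∈ ρ := by
  obtain ⟨h2, -, -, -, h0, -⟩ := hp
  exact h0 ▸ List.getElem_mem _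

theorem PCP.mem_lst {ρ : List V} {s t x y} (hp : PCP G col ρ s t x y) : t ∈ ρ := by
  obtain ⟨h2, -, -, -, -, hl, -⟩ := hp
  exact hl ▸ List.getElem_mem _


theorem PCP.reverse (hsym : ∀ u v, col u v = col v u) {ρ : List V} {s t x y}
    (hp : PCP G col ρ s t x y) : PCP G col ρ.reverse t s y x := by
  obtain ⟨h2, hnd, hch, hpc, h0, hl, hx, hy⟩ := hp
  have hlen : ρ.reverse.length = ρ.length := by simp
  refine ⟨by omega, by simpa using hnd, ?_, ?_, ?_, ?_, ?_, ?_⟩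
  · apply chain_of_getElem
    intro i h
    rw [List.getElem_reverse, List.getElem_reverse]
    rw [ge_congr (show ρ.length - 1 - i = (ρ.length - 1 - (i+1)) + 1 by simp at h; omega)]
    exact (chain_getElem hch _).symm
  · intro i h
    simp only [List.getElem_reverse]
    rw [ge_congr (show ρ.length - 1 - i = (ρ.length - 1 - (i+2)) + 2 by simp at h; omega),
      ge_congr (show ρ.length - 1 - (i+1) = (ρ.length - 1 - (i+2)) + 1 by simp at h; omega)]
    have := hpc (ρ.length - 1 - (i+2)) (by simp at h; omega)
    rw [hsym (ρ[ρ.length - 1 - (i + 2) + 2]'(by simp at h; omega))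
        (ρ[ρ.length - 1 - (i + 2) + 1]'(by simp at h; omega)),
      hsym (ρ[ρ.length - 1 - (i + 2) + 1]'(by simp at h; omega))
        (ρ[ρ.length - 1 - (i + 2)]'(by simp at h; omega))]
    exact fun hcon => this hcon.symm
  · rw [List.getElem_reverse, ge_congr (show ρ.length - 1 - 0 = ρ.length - 1 by omega)]
    exact hl
  · rw [List.getElem_reverse,
      ge_congr (show ρ.length - 1 - (ρ.reverse.length - 1) = 0 by
        simp only [List.length_reverse]; omega)]
    exact h0
  · rw [List.getElem_reverse, ge_congr (show ρ.length - 1 - 1 = ρ.length - 2 by omega)]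
    exact hy
  · rw [List.getElem_reverse,
      ge_congr (show ρ.length - 1 - (ρ.reverse.length - 2) = 1 by
        simp only [List.length_reverse]; omega)]
    exact hx

theorem PCP.drop {ρ : List V} {s t x y} (hp : PCP G col ρ s t x y) {i : ℕ}
    (h : i + 1 < ρ.length) :
    PCP G col (ρ.drop i) (ρ[i]'(by omega)) t (col (ρ[i]'(by omega)) (ρ[i+1]'h)) y := by
  obtain ⟨h2, hnd, hch, hpc, h0, hl, hx, hy⟩ := hp
  have hlen : (ρ.drop i).length = ρ.length - i := by simp
  refine ⟨by omega, hnd.sublist (List.drop_sublist i ρ), ?_, ?_, ?_, ?_, ?_, ?_⟩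
  · apply chain_of_getElem
    intro j hj
    simp only [List.getElem_drop]
    rw [ge_congr (show i + (j+1) = (i+j) + 1 by omega)]
    exact chain_getElem hch (by simp at hj; omega)
  · intro j hj
    simp only [List.getElem_drop]
    rw [ge_congr (show i + (j+1) = (i+j) + 1 by omega),
      ge_congr (show i + (j+2) = (i+j) + 2 by omega)]
    exact hpc (i+j) (by simp at hj; omega)
  · simp
  · simp only [List.getElem_drop]
    rw [ge_congr (show i + ((ρ.drop i).length - 1) = ρ.length - 1 by simp; omega)]
    exact hl
  · simp
  · simp only [List.getElem_drop]
    rw [ge_congr (show i + ((ρ.drop i).length - 2) = ρ.length - 2 by simp; omega)]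
    exact hy

theorem PCP.take {ρ : List V} {s t x y} (hp : PCP G col ρ s t x y) {i : ℕ}
    (h1 : 1 ≤ i) (h : i < ρ.length) :
    PCP G col (ρ.take (i+1)) s (ρ[i]'h) x (col (ρ[i]'h) (ρ[i-1]'(by omega))) := by
  obtain ⟨h2, hnd, hch, hpc, h0, hl, hx, hy⟩ := hp
  have hlen : (ρ.take (i+1)).length = i + 1 := by simp; omega
  refine ⟨by omega, hnd.sublist (List.take_sublist _ ρ), ?_, ?_, ?_, ?_, ?_, ?_⟩
  · apply chain_of_getElem
    intro j hj
    simp only [List.getElem_take]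
    exact chain_getElem hch (by omega)
  · intro j hj
    simp only [List.getElem_take]
    exact hpc j (by omega)
  · simp only [List.getElem_take]; exact h0
  · simp only [List.getElem_take]
    rw [ge_congr (show (ρ.take (i+1)).length - 1 = i by omega)]
  · simp only [List.getElem_take]; exact hx
  · simp only [List.getElem_take]
    rw [ge_congr (show (ρ.take (i+1)).length - 2 = i - 1 by omega)]


theorem append_drop_getElem_left {p q : List V} {k : ℕ} (hk : k < p.length) :
    (p ++ q.drop 1)[k]'(by simp [List.length_append]; omega) = p[k] :=
  List.getElem_append_left hk

theorem append_drop_getElem_right {p q : List V} {k : ℕ} (hk : p.length ≤ k)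
    (h2 : k - p.length + 1 < q.length) :
    (p ++ q.drop 1)[k]'(by simp [List.length_append]; omega) = q[k - p.length + 1]'h2 := by
  rw [List.getElem_append_right hk]
  simp only [List.getElem_drop]
  exact ge_congr (by omega)

theorem glue_len {p q : List V} (hp2 : 2 ≤ p.length) (hq2 : 2 ≤ q.length) :
    (p ++ q.drop 1).length = p.length + q.length - 1 := by
  simp [List.length_append]; omega

theorem glue_chain {p q : List V} {s m t x y c₁ c₂}
    (hp : PCP G col p s m x c₁) (hq : PCP G col q m t c₂ y) :
    (p ++ q.drop 1).Chain' G.Adj := by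
  obtain ⟨hp2, hpnd, hpch, hppc, hp0, hpl, hpx, hpy⟩ := hp
  obtain ⟨hq2, hqnd, hqch, hqpc, hq0, hql, hqx, hqy⟩ := hq
  have hN : (p ++ q.drop 1).length = p.length + q.length - 1 := glue_len hp2 hq2
  apply chain_of_getElem
  intro i h
  rw [hN] at h
  rcases lt_trichotomy (i+1) p.length with h1 | h1 | h1
  · rw [append_drop_getElem_left (k := i) (by omega), append_drop_getElem_left h1]
    exact chain_getElem hpch h1
  · rw [append_drop_getElem_left (k := i) (by omega),
      append_drop_getElem_right (k := i+1) (by omega) (by omega)]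
    have e1 : p[i]'(by omega) = m := by
      rw [ge_congr (show i = p.length - 1 by omega)]; exact hpl
    have e2 : (q[i+1 - p.length + 1]'(by omega)) = q[1]'(by omega) :=
      ge_congr (by omega)
    rw [e1, e2, ← hq0]
    exact chain_getElem hqch (by omega)
  · rw [append_drop_getElem_right (k := i) (by omega) (by omega),
      append_drop_getElem_right (k := i+1) (by omega) (by omega)]
    rw [ge_congr (show i + 1 - p.length + 1 = (i - p.length + 1) + 1 by omega)]
    exact chain_getElem hqch (by omega)

theorem glue_pc3 (hsym : ∀ u v, col u v = col v u) {p q : List V} {s m t x y c₁ c₂}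
    (hp : PCP G col p s m x c₁) (hq : PCP G col q m t c₂ y) (hc : c₁ ≠ c₂) :
    PC3 col (p ++ q.drop 1) := by
  obtain ⟨hp2, hpnd, hpch, hppc, hp0, hpl, hpx, hpy⟩ := hp
  obtain ⟨hq2, hqnd, hqch, hqpc, hq0, hql, hqx, hqy⟩ := hq
  have hN : (p ++ q.drop 1).length = p.length + q.length - 1 := glue_len hp2 hq2
  intro i h
  rw [hN] at h
  rcases (by omega : i + 2 < p.length ∨ i + 2 = p.length ∨ i + 1 = p.length ∨ p.length ≤ i)
    with h1 | h1 | h1 | h1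
  · rw [append_drop_getElem_left (k := i) (by omega),
      append_drop_getElem_left (k := i+1) (by omega), append_drop_getElem_left h1]
    exact hppc i h1
  · -- triple (p[i], p[i+1] = m, q[1]) : colors (flip c₁) vs c₂
    rw [append_drop_getElem_left (k := i) (by omega),
      append_drop_getElem_left (k := i+1) (by omega),
      append_drop_getElem_right (k := i+2) (by omega) (by omega)]
    have e1 : p[i+1]'(by omega) = m := by
      rw [ge_congr (show i+1 = p.length - 1 by omega)]; exact hpl
    have e0 : p[i]'(by omega) = p[p.length - 2]'(by omega) := ge_congr (by omega)
    have e2 : (q[i+2 - p.length + 1]'(by omega)) = q[1]'(by omega) := ge_congr (by omega)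
    rw [e1, e0, e2]
    rw [hsym (p[p.length - 2]'(by omega)) m]
    rw [hpy, hqx]
    exact hc
  · -- triple (m = q[0], q[1], q[2])
    rw [append_drop_getElem_left (k := i) (by omega),
      append_drop_getElem_right (k := i+1) (by omega) (by omega),
      append_drop_getElem_right (k := i+2) (by omega) (by omega)]
    have e1 : p[i]'(by omega) = m := by
      rw [ge_congr (show i = p.length - 1 by omega)]; exact hpl
    have e2 : (q[i+1 - p.length + 1]'(by omega)) = q[1]'(by omega) := ge_congr (by omega)
    have e3 : (q[i+2 - p.length + 1]'(by omega)) = q[2]'(by omega) := ge_congr (by omega)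
    rw [e1, e2, e3, ← hq0]
    exact hqpc 0 (by omega)
  · rw [append_drop_getElem_right (k := i) (by omega) (by omega),
      append_drop_getElem_right (k := i+1) (by omega) (by omega),
      append_drop_getElem_right (k := i+2) (by omega) (by omega)]
    rw [ge_congr (show i+1 - p.length + 1 = (i - p.length + 1) + 1 by omega),
      ge_congr (show i+2 - p.length + 1 = (i - p.length + 1) + 2 by omega)]
    exact hqpc (i - p.length + 1) (by omega)

theorem glue (hsym : ∀ u v, col u v = col v u) {p q : List V} {s m t x y c₁ c₂}
    (hp : PCP G col p s m x c₁) (hq : PCP G col q m t c₂ y) (hc : c₁ ≠ c₂)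
    (hdisj : ∀ w ∈ p, w ∈ q → w = m) :
    PCP G col (p ++ q.drop 1) s t x y := by
  have hN := glue_len hp.len hq.len
  have hch := glue_chain hp hq
  have hpc := glue_pc3 hsym hp hq hc
  obtain ⟨hp2, hpnd, hpch, hppc, hp0, hpl, hpx, hpy⟩ := hp
  obtain ⟨hq2, hqnd, hqch, hqpc, hq0, hql, hqx, hqy⟩ := hq
  have hqcons : q[0]'(by omega) :: q.drop 1 = q := List.getElem_cons_drop (by omega : 0 < q.length)
  have hm : m ∉ q.drop 1 := by
    intro hmem
    have : ¬ (q[0]'(by omega)) ∈ q.drop 1 := by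
      have := hqcons ▸ hqnd
      exact (List.nodup_cons.mp this).1
    exact this (hq0 ▸ hmem)
  have hnd : (p ++ q.drop 1).Nodup := by
    rw [List.nodup_append]
    refine ⟨hpnd, hqnd.sublist (List.drop_sublist _ _), ?_⟩
    intro w hwp w' hwq hww; subst hww
    exact hm ((hdisj w hwp (List.mem_of_mem_drop hwq)) ▸ hwq)
  refine ⟨by omega, hnd, hch, hpc, ?_, ?_, ?_, ?_⟩
  · rw [append_drop_getElem_left (k := 0) (by omega)]; exact hp0
  · rw [ge_congr (show (p ++ q.drop 1).length - 1 = p.length + q.length - 2 by omega),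
      append_drop_getElem_right (by omega) (by omega),
      ge_congr (show p.length + q.length - 2 - p.length + 1 = q.length - 1 by omega)]
    exact hql
  · rw [append_drop_getElem_left (k := 1) (by omega)]; exact hpx
  · rcases (by omega : q.length = 2 ∨ 3 ≤ q.length) with h3 | h3
    · rw [ge_congr (show (p ++ q.drop 1).length - 2 = p.length - 1 by omega),
        append_drop_getElem_left (by omega), hpl]
      have : q[q.length - 2]'(by omega) = m := by
        rw [ge_congr (show q.length - 2 = 0 by omega)]; exact hq0
      rw [← this] at hpl ⊢
      exact hqy
    · rw [ge_congr (show (p ++ q.drop 1).length - 2 = p.length + q.length - 3 by omega),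
        append_drop_getElem_right (by omega) (by omega),
        ge_congr (show p.length + q.length - 3 - p.length + 1 = q.length - 2 by omega)]
      exact hqy


theorem pc3_append_singleton {l : List V} {v : V} (hpc : PC3 col l)
    (hlast : ∀ (h : 2 ≤ l.length),
      col (l[l.length-2]'(by omega)) (l[l.length-1]'(by omega)) ≠
        col (l[l.length-1]'(by omega)) v) :
    PC3 col (l ++ [v]) := by
  intro i h
  simp only [List.length_append, List.length_cons, List.length_nil] at h
  rcases (by omega : i + 2 < l.length ∨ i + 2 = l.length) with h1 | h1
  · rw [List.getElem_append_left (by omega), List.getElem_append_left (by omega),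
      List.getElem_append_left h1]
    exact hpc i h1
  · rw [List.getElem_append_left (show i < l.length by omega),
      List.getElem_append_left (show i + 1 < l.length by omega),
      List.getElem_append_right (show l.length ≤ i + 2 by omega)]
    have e0 : l[i]'(by omega) = l[l.length - 2]'(by omega) := ge_congr (by omega)
    have e1 : l[i+1]'(by omega) = l[l.length - 1]'(by omega) := ge_congr (by omega)
    have e2 : [v][i + 2 - l.length]'(by simp; omega) = v := by
      rw [ge_congr (show i + 2 - l.length = 0 by omega)]
      rfl
    rw [e0, e1, e2]
    exact hlast (by omega)

theorem take_two {l : List V} (h : 2 ≤ l.length) :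
    l.take 2 = [l[0]'(by omega), l[1]'(by omega)] := by
  match l, h with
  | a :: b :: r, _ => rfl

theorem getLast_notMem_dropLast {l : List V} (hnd : l.Nodup) (hne : l ≠ []) :
    l.getLast hne ∉ l.dropLast := by
  have e := List.dropLast_concat_getLast hne
  have := e ▸ hnd
  rw [List.nodup_append] at this
  intro hmem
  exact this.2.2 _ hmem _ (by simp) rfl

theorem cyc (hsym : ∀ u v, col u v = col v u) {p q : List V} {t z : V} {x₁ d e y₁ : γ}
    (hp : PCP G col p t z x₁ d) (hq : PCP G col q z t e y₁)
    (hde : d ≠ e) (hyx : y₁ ≠ x₁)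
    (hdisj : ∀ w ∈ p, w ∈ q → w = z ∨ w = t) :
    ∃ C, IsPCCycle G col C := by
  have hch := glue_chain hp hq
  have hpc3 := glue_pc3 hsym hp hq hde
  have hN := glue_len hp.len hq.len
  obtain ⟨hp2, hpnd, hpch, hppc, hp0, hpl, hpx, hpy⟩ := hp
  obtain ⟨hq2, hqnd, hqch, hqpc, hq0, hql, hqx, hqy⟩ := hq
  -- not both of length two
  have hb : 5 ≤ p.length + q.length := by
    rcases (by omega : 5 ≤ p.length + q.length ∨ (p.length = 2 ∧ q.length = 2)) with h | ⟨e1, e2⟩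
    · exact h
    · exfalso
      apply hde
      rw [← hpy, ← hqx]
      congr 1
      rw [ge_congr (show p.length - 2 = 0 by omega), hp0, ← hql,
        ge_congr (show q.length - 1 = 1 by omega)]
  have hdl : (q.drop 1).length = q.length - 1 := by simp
  have hWlen : (p ++ q.drop 1).length = p.length + q.length - 1 := hN
  have hW0 : (p ++ q.drop 1)[0]'(by omega) = t := by
    rw [append_drop_getElem_left (k := 0) (by omega)]; exact hp0
  have hW1 : (p ++ q.drop 1)[1]'(by omega) = p[1]'(by omega) := by
    rw [append_drop_getElem_left (k := 1) (by omega)]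
  have hWl : (p ++ q.drop 1)[(p ++ q.drop 1).length - 1]'(by omega) = t := by
    rw [ge_congr (show (p ++ q.drop 1).length - 1 = p.length + q.length - 2 by omega),
      append_drop_getElem_right (by omega) (by omega),
      ge_congr (show p.length + q.length - 2 - p.length + 1 = q.length - 1 by omega)]
    exact hql
  have hWp : (p ++ q.drop 1)[(p ++ q.drop 1).length - 2]'(by omega) =
      q[q.length - 2]'(by omega) := by
    rcases (by omega : q.length = 2 ∨ 3 ≤ q.length) with h3 | h3
    · rw [ge_congr (show (p ++ q.drop 1).length - 2 = p.length - 1 by omega),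
        append_drop_getElem_left (by omega), hpl,
        ge_congr (show q.length - 2 = 0 by omega), hq0]
    · rw [ge_congr (show (p ++ q.drop 1).length - 2 = p.length + q.length - 3 by omega),
        append_drop_getElem_right (by omega) (by omega),
        ge_congr (show p.length + q.length - 3 - p.length + 1 = q.length - 2 by omega)]
  -- the extended list
  have hchX : ((p ++ q.drop 1) ++ [p[1]'(by omega)]).Chain' G.Adj := by
    apply chain_of_getElem
    intro i h
    simp only [List.length_append, List.length_cons, List.length_nil] at h
    rcases (by omega : i + 1 < (p ++ q.drop 1).length ∨ i + 1 = (p ++ q.drop 1).length)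
      with h1 | h1
    · rw [List.getElem_append_left (by omega), List.getElem_append_left h1]
      exact chain_getElem hch h1
    · rw [List.getElem_append_left (show i < (p ++ q.drop 1).length by omega),
        List.getElem_append_right (show (p ++ q.drop 1).length ≤ i + 1 by omega)]
      have e0 : (p ++ q.drop 1)[i]'(by omega) = t := by
        rw [ge_congr (show i = (p ++ q.drop 1).length - 1 by omega)]; exact hWl
      have e1 : [p[1]'(by omega)][i + 1 - (p ++ q.drop 1).length]'(by simp; omega) =
          p[1]'(by omega) := by
        rw [ge_congr (show i + 1 - (p ++ q.drop 1).length = 0 by simp at h1 ⊢; omega)]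
        rfl
      rw [e0, e1, ← hp0]
      exact chain_getElem hpch (by omega)
  have hpcX : PC3 col ((p ++ q.drop 1) ++ [p[1]'(by omega)]) := by
    apply pc3_append_singleton hpc3
    intro h
    rw [hWp, hWl]
    rw [hsym (q[q.length - 2]'(by omega)) t, hqy, hpx]
    exact hyx
  -- the cycle
  refine ⟨(p ++ q.drop 1).dropLast, ?_, ?_, ?_, ?_⟩
  · simp only [List.length_dropLast]; omega
  · have hCdef : (p ++ q.drop 1).dropLast = p ++ (q.drop 1).dropLast := by
      rw [List.dropLast_append_of_ne_nil]
      intro hcon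
      have := congrArg List.length hcon
      simp at this
      omega
    rw [hCdef, List.nodup_append]
    refine ⟨hpnd, (hqnd.sublist ((List.dropLast_sublist _).trans (List.drop_sublist _ _))), ?_⟩
    intro w hwp w' hwmid hww; subst hww
    have hwq1 : w ∈ q.drop 1 := List.mem_of_mem_dropLast hwmid
    have hwq : w ∈ q := List.mem_of_mem_drop hwq1
    have hz : z ∉ q.drop 1 := by
      have hqcons : q[0]'(by omega) :: q.drop 1 = q := List.getElem_cons_drop (by omega : 0 < q.length)
      have := hqcons ▸ hqnd
      exact fun hmem => (List.nodup_cons.mp this).1 (hq0 ▸ hmem)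
    have ht : t ∉ (q.drop 1).dropLast := by
      have hne : q.drop 1 ≠ [] := by
        intro hcon; have := congrArg List.length hcon; simp at this; omega
      have hnm := getLast_notMem_dropLast (hqnd.sublist (List.drop_sublist _ _)) hne
      have hgl : (q.drop 1).getLast hne = t := by
        rw [List.getLast_eq_getElem]
        simp only [List.getElem_drop]
        rw [ge_congr (show 1 + ((q.drop 1).length - 1) = q.length - 1 by simp; omega)]
        exact hql
      exact hgl ▸ hnm
    rcases hdisj w hwp hwq with rfl | rfl
    · exact hz hwq1
    · exact ht hwmid
  all_goals {
    have hkey : (p ++ q.drop 1).dropLast ++ ((p ++ q.drop 1).dropLast.take 2) =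
        (p ++ q.drop 1) ++ [p[1]'(by omega)] := by
      have h2C : 2 ≤ (p ++ q.drop 1).dropLast.length := by
        simp only [List.length_dropLast]; omega
      rw [take_two h2C]
      have e0 : (p ++ q.drop 1).dropLast[0]'(by omega) = t := by
        simp only [List.getElem_dropLast]; exact hW0
      have e1 : (p ++ q.drop 1).dropLast[1]'(by omega) = p[1]'(by omega) := by
        simp only [List.getElem_dropLast]; exact hW1
      rw [e0, e1]
      have hsplit : (p ++ q.drop 1).dropLast ++ [t, p[1]'(by omega)] =
          ((p ++ q.drop 1).dropLast ++ [t]) ++ [p[1]'(by omega)] := by simp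
      rw [hsplit]
      congr 1
      have hWne : (p ++ q.drop 1) ≠ [] := by
        intro hcon; have := congrArg List.length hcon; simp at this; omega
      have hfin := List.dropLast_concat_getLast hWne
      rw [List.getLast_eq_getElem] at hfin
      conv_rhs => rw [← hfin]
      rw [hWl]
    first
      | (rw [hkey]; exact hchX)
      | (rw [hkey]; exact pc3_iff.mpr hpcX)
  }


theorem exists_first_hit (P : V → Prop) :
    ∀ (l : List V), (∃ w ∈ l, P w) →
      ∃ (i : ℕ) (h : i < l.length), P (l[i]'h) ∧ ∀ (j : ℕ) (hj : j < i), ¬ P (l[j]'(by omega))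
  | [], hx => by simp at hx
  | a :: l, hx => by
    classical
    by_cases ha : P a
    · exact ⟨0, by simp, ha, fun j hj => absurd hj (Nat.not_lt_zero _)⟩
    · have hx' : ∃ w ∈ l, P w := by
        obtain ⟨w, hw, hPw⟩ := hx
        rcases List.mem_cons.mp hw with rfl | hw'
        · exact absurd hPw ha
        · exact ⟨w, hw', hPw⟩
      obtain ⟨i, h, h1, h2⟩ := exists_first_hit P l hx'
      refine ⟨i + 1, by simp; omega, by simpa using h1, ?_⟩
      intro j hj
      match j with
      | 0 => simpa using ha
      | j + 1 => simpa using h2 j (by omega)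

theorem mem_take_getElem {l : List V} {n : ℕ} {w : V} (hw : w ∈ l.take n) :
    ∃ (j : ℕ) (hj : j < l.length), j < n ∧ l[j] = w := by
  obtain ⟨j, hj, hje⟩ := List.mem_iff_getElem.mp hw
  simp only [List.length_take] at hj
  refine ⟨j, by omega, by omega, ?_⟩
  rw [← hje]
  exact List.getElem_take.symm

theorem PCP.lst_not_mem_take {ρ : List V} {s t x y} (hp : PCP G col ρ s t x y)
    {n : ℕ} (hn : n < ρ.length) : t ∉ ρ.take n := by
  intro hmem
  obtain ⟨j, hj, hjn, hje⟩ := mem_take_getElem hmem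
  rw [← hp.lst] at hje
  have := (List.Nodup.getElem_inj_iff hp.nodup).mp hje
  omega

theorem PCP.eq_cons {ρ : List V} {s t x y} (hp : PCP G col ρ s t x y) :
    ρ = s :: ρ.drop 1 := by
  have h := List.getElem_cons_drop (by have := hp.len; omega : 0 < ρ.length)
  rw [hp.fst] at h
  exact h.symm

theorem take_reverse_getElem {l : List V} {i k : ℕ} (hi : i < l.length) (hk : k ≤ i) :
    ((l.take (i+1)).reverse)[k]'(by simp; omega) = l[i-k]'(by omega) := by
  rw [List.getElem_reverse]
  simp only [List.getElem_take]
  exact ge_congr (by simp; omega)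

/-- From a pair of internally disjoint PC paths `P, Q` from `t` to `t'` with distinct
start colors and the same end color, every vertex `s` of `P` other than `t'` has
a two-fan of PC paths to `t'` inside `P ∪ Q`. -/
theorem two_fan (hsym : ∀ u v, col u v = col v u) {P Q : List V} {t t' : V} {a₁ a₂ b : γ}
    (hP : PCP G col P t t' a₁ b) (hQ : PCP G col Q t t' a₂ b) (ha : a₁ ≠ a₂)
    (hdisj : ∀ w ∈ P, w ∈ Q → w = t ∨ w = t')
    {s : V} (hs : s ∈ P) (hs' : s ≠ t') :
    ∃ (x₁ x₂ : γ) (ρ₁ ρ₂ : List V), x₁ ≠ x₂ ∧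
      PCP G col ρ₁ s t' x₁ b ∧ (∀ w ∈ ρ₁, w ∈ P ∨ w ∈ Q) ∧
      PCP G col ρ₂ s t' x₂ b ∧ (∀ w ∈ ρ₂, w ∈ P ∨ w ∈ Q) := by
  obtain ⟨i, hilen, hieq⟩ := List.mem_iff_getElem.mp hs
  subst hieq
  rcases Nat.eq_zero_or_pos i with rfl | hi1
  · -- s = t : use the two paths themselves
    have hPt : P[0]'hilen = t := hP.fst
    rw [hPt]
    exact ⟨a₁, a₂, P, Q, ha, hP, fun w hw => Or.inl hw, hQ, fun w hw => Or.inr hw⟩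
  · have hilt : i < P.length - 1 := by
      rcases (by omega : i < P.length - 1 ∨ i = P.length - 1) with h | h
      · exact h
      · exact absurd (ge_congr h ▸ hP.lst ▸ rfl : P[i]'hilen = t') hs'
    -- forward path
    have h1 := hP.drop (i := i) (by omega)
    -- backward path glued with Q
    have h2t := (hP.take (i := i) (by omega) (by omega)).reverse hsym
    have h2 := glue hsym h2t hQ ha ?_
    · refine ⟨col (P[i]'hilen) (P[i+1]'(by omega)), col (P[i]'hilen) (P[i-1]'(by omega)),
        P.drop i, (P.take (i+1)).reverse ++ Q.drop 1, ?_, h1, ?_, h2, ?_⟩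
      · intro hcon
        have h3 := hP.pc3 (i-1) (by omega)
        rw [ge_congr (show i-1+1 = i by omega), ge_congr (show i-1+2 = i+1 by omega)] at h3
        apply h3
        rw [hsym (P[i-1]'(by omega)) (P[i]'hilen)]
        exact hcon.symm
      · intro w hw
        exact Or.inl (List.mem_of_mem_drop hw)
      · intro w hw
        rcases List.mem_append.mp hw with hw' | hw'
        · exact Or.inl (List.mem_of_mem_take (List.mem_reverse.mp hw'))
        · exact Or.inr (List.mem_of_mem_drop hw')
    · -- disjointness for the glue at t
      intro w hw hwQ
      have hwP : w ∈ P := List.mem_of_mem_take (List.mem_reverse.mp hw)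
      rcases hdisj w hwP hwQ with rfl | rfl
      · rfl
      · exact absurd (List.mem_reverse.mp hw) (hP.lst_not_mem_take (by omega))


variable (G col) in
/-- The growing invariant: a vertex set `U` with terminal `t` and terminal color `β`,
such that every other vertex of `U` has two PC paths to `t` inside `U` with distinct
first colors and last color `β`. -/
def Inv (U : Finset V) (t : V) (β : γ) : Prop :=
  t ∈ U ∧ ∀ s ∈ U, s ≠ t →
    ∃ (x₁ x₂ : γ) (ρ₁ ρ₂ : List V), x₁ ≠ x₂ ∧
      PCP G col ρ₁ s t x₁ β ∧ (∀ w ∈ ρ₁, w ∈ U) ∧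
      PCP G col ρ₂ s t x₂ β ∧ (∀ w ∈ ρ₂, w ∈ U)

/-- Unpacking the hypothesis at a vertex `t`: either we already get a PC cycle, or
we get two internally disjoint PC paths to a common endpoint with distinct start
colors and a *common* end color. -/
theorem probes (hsym : ∀ u v, col u v = col v u)
    (h : ∀ v : V, ∃ (v' : V) (P Q : List V) (α₁ β₁ α₂ β₂ : γ),
      IsPCPath G col P ∧ IsPCPath G col Q ∧
      HasChar col P v α₁ β₁ v' ∧ HasChar col Q v α₂ β₂ v' ∧
      α₁ ≠ α₂ ∧ ∀ w, w ∈ P → w ∈ Q → w = v ∨ w = v') (t : V) :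
    (∃ C, IsPCCycle G col C) ∨
    ∃ (t' : V) (P Q : List V) (a₁ a₂ b : γ), a₁ ≠ a₂ ∧
      PCP G col P t t' a₁ b ∧ PCP G col Q t t' a₂ b ∧
      (∀ w ∈ P, w ∈ Q → w = t ∨ w = t') := by
  obtain ⟨t', P, Q, α₁, β₁, α₂, β₂, hPp, hQp, hPc, hQc, hne, hdisj⟩ := h t
  have hP := pcp_of_hasChar hPp hPc
  have hQ := pcp_of_hasChar hQp hQc
  by_cases hβ : β₁ = β₂
  · exact Or.inr ⟨t', P, Q, α₁, α₂, β₁, hne, hP, hβ ▸ hQ, fun w hw hw' => hdisj w hw hw'⟩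
  · refine Or.inl (cyc hsym hP (hQ.reverse hsym) hβ hne.symm ?_)
    intro w hw hw'
    exact (hdisj w hw (List.mem_reverse.mp hw')).symm

/-- If a probe with start color different from the terminal color hits the set `U`,
we obtain a PC cycle. -/
theorem win (hsym : ∀ u v, col u v = col v u) {U : Finset V} {t : V} {β : γ}
    (inv : Inv G col U t β) {X : List V} {t' : V} {aX b : γ}
    (hX : PCP G col X t t' aX b) (haX : aX ≠ β)
    (hhit : ∃ w ∈ X.drop 1, w ∈ U) :
    ∃ C, IsPCCycle G col C := by
  classical
  obtain ⟨i, hi, hPi, hmin⟩ := exists_first_hit (· ∈ U) (X.drop 1) hhit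
  have hilen : i + 1 < X.length := by simp at hi; omega
  have heq : (X.drop 1)[i]'hi = X[i+1]'hilen := by
    simp only [List.getElem_drop]
    exact ge_congr (by omega)
  rw [heq] at hPi
  have hzt : X[i+1]'hilen ≠ t := by
    intro hcon
    rw [← hX.fst] at hcon
    have := (List.Nodup.getElem_inj_iff hX.nodup).mp hcon
    omega
  -- the initial segment of the probe
  have hseg := hX.take (i := i+1) (by omega) hilen
  rw [ge_congr (show i + 1 - 1 = i by omega)] at hseg
  -- two-fan from the invariant
  obtain ⟨x₁, x₂, ρ₁, ρ₂, hxx, h1, h1U, h2, h2U⟩ := inv.2 _ hPi hzt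
  -- choose the one avoiding the arrival color
  have key : ∀ (xs : γ) (ρ : List V), PCP G col ρ (X[i+1]'hilen) t xs β →
      (∀ w ∈ ρ, w ∈ U) → xs ≠ col (X[i+1]'hilen) (X[i]'(by omega)) →
      ∃ C, IsPCCycle G col C := by
    intro xs ρ hρ hρU hxs
    apply cyc hsym hseg hρ (fun hcon => hxs hcon.symm) haX.symm
    intro w hw hwρ
    have hwU : w ∈ U := hρU w hwρ
    obtain ⟨j, hj, hjn, hje⟩ := mem_take_getElem hw
    rcases (by omega : j = 0 ∨ (1 ≤ j ∧ j ≤ i) ∨ j = i + 1) with rfl | ⟨hj1, hj2⟩ | rfl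
    · exact Or.inr (hje ▸ hX.fst)
    · exfalso
      have hmem : ¬ ((X.drop 1)[j-1]'(by simp; omega)) ∈ U := hmin (j-1) (by omega)
      apply hmem
      have : (X.drop 1)[j-1]'(by simp; omega) = X[j]'(by omega) := by
        simp only [List.getElem_drop]
        exact ge_congr (by omega)
      rw [this, hje]
      exact hwU
    · exact Or.inl hje.symm
  by_cases hd : x₁ = col (X[i+1]'hilen) (X[i]'(by omega))
  · exact key x₂ ρ₂ h2 h2U (fun hcon => hxx (hd ▸ hcon ▸ rfl))
  · exact key x₁ ρ₁ h1 h1U hd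


theorem grow (hsym : ∀ u v, col u v = col v u) {U : Finset V} {t : V} {β : γ}
    (inv : Inv G col U t β) {t' : V} {R R₂ : List V} {aR aR₂ b : γ}
    (hR : PCP G col R t t' aR b) (hR₂ : PCP G col R₂ t t' aR₂ b)
    (ha : aR ≠ aR₂) (haR : aR ≠ β)
    (hdisj : ∀ w ∈ R, w ∈ R₂ → w = t ∨ w = t')
    (havoid : ∀ w ∈ R.drop 1, w ∉ U) :
    ∃ (U' : Finset V) (t'' : V) (β' : γ), Inv G col U' t'' β' ∧ U ⊂ U' := by
  classical
  have htR : t ∈ R := hR.fst ▸ List.getElem_mem _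
  have ht'R : t' ∈ R := hR.lst ▸ List.getElem_mem _
  have ht'U : t' ∉ U := by
    have hmem : t' ∈ R.drop 1 := by
      have e : (R.drop 1)[R.length - 2]'(by simp; have := hR.len; omega) = t' := by
        simp only [List.getElem_drop]
        rw [ge_congr (show 1 + (R.length - 2) = R.length - 1 by have := hR.len; omega)]
        exact hR.lst
      exact e ▸ List.getElem_mem _
    exact havoid _ hmem
  have hmemR : ∀ w ∈ R, w ∈ U → w = t := by
    intro w hw hwU
    rw [hR.eq_cons] at hw
    rcases List.mem_cons.mp hw with rfl | hw'
    · rfl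
    · exact absurd hwU (havoid _ hw')
  have hmap : ∀ w : V, (w ∈ U ∨ w ∈ R ∨ w ∈ R₂) →
      w ∈ U ∪ R.toFinset ∪ R₂.toFinset := by
    intro w hw
    rcases hw with h | h | h
    · exact Finset.mem_union_left _ (Finset.mem_union_left _ h)
    · exact Finset.mem_union_left _ (Finset.mem_union_right _ (List.mem_toFinset.mpr h))
    · exact Finset.mem_union_right _ (List.mem_toFinset.mpr h)
  refine ⟨U ∪ R.toFinset ∪ R₂.toFinset, t', b, ⟨hmap t' (Or.inr (Or.inl ht'R)), ?_⟩, ?_⟩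
  swap
  · rw [Finset.ssubset_iff_of_subset
      (fun w hw => hmap w (Or.inl hw))]
    exact ⟨t', hmap t' (Or.inr (Or.inl ht'R)), ht'U⟩
  intro s hsU' hst'
  by_cases hsR : s ∈ R
  · obtain ⟨x₁, x₂, ρ₁, ρ₂, hxx, h1, h1m, h2, h2m⟩ := two_fan hsym hR hR₂ ha hdisj hsR hst'
    refine ⟨x₁, x₂, ρ₁, ρ₂, hxx, h1, ?_, h2, ?_⟩
    · exact fun w hw => hmap w (Or.inr (h1m w hw))
    · exact fun w hw => hmap w (Or.inr (h2m w hw))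
  by_cases hsU : s ∈ U
  · have hst : s ≠ t := fun hcon => hsR (hcon ▸ htR)
    obtain ⟨x₁, x₂, ρ₁, ρ₂, hxx, h1, h1U, h2, h2U⟩ := inv.2 s hsU hst
    have key : ∀ (xs : γ) (ρ : List V), PCP G col ρ s t xs β → (∀ w ∈ ρ, w ∈ U) →
        PCP G col (ρ ++ R.drop 1) s t' xs b ∧
          (∀ w ∈ ρ ++ R.drop 1, w ∈ U ∪ R.toFinset ∪ R₂.toFinset) := by
      intro xs ρ hρ hρU
      refine ⟨glue hsym hρ hR (fun hcon => haR hcon.symm)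
        (fun w hw hwR => hmemR w hwR (hρU w hw)), ?_⟩
      intro w hw
      rcases List.mem_append.mp hw with hw' | hw'
      · exact hmap w (Or.inl (hρU w hw'))
      · exact hmap w (Or.inr (Or.inl (List.mem_of_mem_drop hw')))
    obtain ⟨k1, k1m⟩ := key x₁ ρ₁ h1 h1U
    obtain ⟨k2, k2m⟩ := key x₂ ρ₂ h2 h2U
    exact ⟨x₁, x₂, ρ₁ ++ R.drop 1, ρ₂ ++ R.drop 1, hxx, k1, k1m, k2, k2m⟩
  -- the hard case : s on the second probe, outside U and R
  have hsR₂ : s ∈ R₂ := by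
    rcases Finset.mem_union.mp hsU' with h' | h'
    · rcases Finset.mem_union.mp h' with h'' | h''
      · exact absurd h'' hsU
      · exact absurd (List.mem_toFinset.mp h'') hsR
    · exact List.mem_toFinset.mp h'
  obtain ⟨i, hilen, hieq⟩ := List.mem_iff_getElem.mp hsR₂
  subst hieq
  have hsnt : R₂[i]'hilen ≠ t := fun hcon => hsU (hcon ▸ inv.1)
  have hi1 : 1 ≤ i := by
    rcases Nat.eq_zero_or_pos i with rfl | h
    · exact absurd hR₂.fst hsnt
    · exact h
  have hilt : i < R₂.length - 1 := by
    rcases (by omega : i < R₂.length - 1 ∨ i = R₂.length - 1) with h | h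
    · exact h
    · exact absurd (ge_congr h ▸ hR₂.lst ▸ rfl : R₂[i]'hilen = t') hst'
  have h1 := hR₂.drop (i := i) (by omega)
  have hrev := (hR₂.take (i := i) (by omega) (by omega)).reverse hsym
  have hrevlen : ((R₂.take (i+1)).reverse).length = i + 1 := by simp; omega
  have hthit : ∃ w ∈ ((R₂.take (i+1)).reverse).drop 1, w ∈ U := by
    refine ⟨t, ?_, inv.1⟩
    have e : (((R₂.take (i+1)).reverse).drop 1)[i-1]'(by simp; omega) = t := by
      simp only [List.getElem_drop]
      rw [ge_congr (show 1 + (i-1) = i by omega)]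
      rw [take_reverse_getElem (by omega) (by omega)]
      rw [ge_congr (show i - i = 0 by omega)]
      exact hR₂.fst
    exact e ▸ List.getElem_mem _
  obtain ⟨j, hj, hPj, hjmin⟩ := exists_first_hit (· ∈ U) _ hthit
  have hjlen : j + 1 < ((R₂.take (i+1)).reverse).length := by simp at hj ⊢; omega
  have hzeq : ((((R₂.take (i+1)).reverse).drop 1))[j]'hj =
      ((R₂.take (i+1)).reverse)[j+1]'hjlen := by
    simp only [List.getElem_drop]; exact ge_congr (by omega)
  rw [hzeq] at hPj
  have hbs := hrev.take (i := j+1) (by omega) (by omega)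
  have hbsmem : ∀ w ∈ ((R₂.take (i+1)).reverse).take (j+2), w ∈ R₂ := fun w hw =>
    List.mem_of_mem_take (List.mem_reverse.mp (List.mem_of_mem_take hw))
  have ht'bs : t' ∉ ((R₂.take (i+1)).reverse).take (j+2) := by
    intro hmem
    exact hR₂.lst_not_mem_take (n := i+1) (by omega)
      (List.mem_reverse.mp (List.mem_of_mem_take hmem))
  have hxx : col (R₂[i]'hilen) (R₂[i+1]'(by omega)) ≠
      col (R₂[i]'hilen) (R₂[i-1]'(by omega)) := by
    intro hcon
    have h3 := hR₂.pc3 (i-1) (by omega)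
    rw [ge_congr (show i-1+1 = i by omega), ge_congr (show i-1+2 = i+1 by omega)] at h3
    exact h3 (by rw [hsym (R₂[i-1]'(by omega)) (R₂[i]'hilen)]; exact hcon.symm)
  -- membership of elements of the backward segment
  have hbspos : ∀ w ∈ ((R₂.take (i+1)).reverse).take (j+2), w ∈ U →
      w = ((R₂.take (i+1)).reverse)[j+1]'hjlen := by
    intro w hw hwU
    obtain ⟨k, hk, hkn, hke⟩ := mem_take_getElem hw
    rcases (by omega : k = 0 ∨ (1 ≤ k ∧ k ≤ j) ∨ k = j + 1) with rfl | ⟨hk1, hk2⟩ | rfl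
    · exfalso
      apply hsU
      have e0 : ((R₂.take (i+1)).reverse)[0]'hk = R₂[i]'hilen := by
        rw [take_reverse_getElem (by omega) (by omega)]
        exact ge_congr (by omega)
      rw [← hke, e0] at hwU
      exact hwU
    · exfalso
      have hnm := hjmin (k-1) (by omega)
      apply hnm
      have e : ((((R₂.take (i+1)).reverse).drop 1))[k-1]'(by simp at hk ⊢; omega) =
          ((R₂.take (i+1)).reverse)[k]'hk := by
        simp only [List.getElem_drop]; exact ge_congr (by omega)
      rw [e, hke]
      exact hwU
    · exact hke.symm
  rw [ge_congr (show j + 1 - 1 = j by omega)] at hbs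
  by_cases hzt : ((R₂.take (i+1)).reverse)[j+1]'hjlen = t
  · -- the backward walk reaches t before any other vertex of U
    have hji : j + 1 = i := by
      have e := take_reverse_getElem (l := R₂) (i := i) (k := j+1) (by omega)
        (by simp at hjlen; omega)
      rw [e, ← hR₂.fst] at hzt
      have := (List.Nodup.getElem_inj_iff hR₂.nodup).mp hzt
      omega
    have hμ : col t (((R₂.take (i+1)).reverse)[j]'(by omega)) = aR₂ := by
      rw [take_reverse_getElem (by omega) (by omega),
        ge_congr (show i - j = 1 by omega)]
      exact hR₂.fcol
    have hbs' := hzt ▸ hbs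
    have hfull := glue hsym hbs' hR (by rw [hμ]; exact ha.symm) ?_
    · refine ⟨col (R₂[i]'hilen) (R₂[i+1]'(by omega)), col (R₂[i]'hilen) (R₂[i-1]'(by omega)),
        R₂.drop i, ((R₂.take (i+1)).reverse).take (j+2) ++ R.drop 1, hxx, h1, ?_, hfull, ?_⟩
      · exact fun w hw => hmap w (Or.inr (Or.inr (List.mem_of_mem_drop hw)))
      · intro w hw
        rcases List.mem_append.mp hw with hw' | hw'
        · exact hmap w (Or.inr (Or.inr (hbsmem w hw')))
        · exact hmap w (Or.inr (Or.inl (List.mem_of_mem_drop hw')))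
    · intro w hw hwR
      rcases hdisj w hwR (hbsmem w hw) with rfl | rfl
      · rfl
      · exact absurd hw ht'bs
  · -- the backward walk first meets U at a vertex z ≠ t : reroute through the invariant
    obtain ⟨y₁, y₂, σ₁, σ₂, hyy, g1, g1U, g2, g2U⟩ := inv.2 _ hPj hzt
    have key : ∀ (ys : γ) (σ : List V),
        PCP G col σ (((R₂.take (i+1)).reverse)[j+1]'hjlen) t ys β →
        (∀ w ∈ σ, w ∈ U) →
        ys ≠ col (((R₂.take (i+1)).reverse)[j+1]'hjlen)
          (((R₂.take (i+1)).reverse)[j]'(by omega)) →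
        ∃ (x₁ x₂ : γ) (ρ₁ ρ₂ : List V), x₁ ≠ x₂ ∧
          PCP G col ρ₁ (R₂[i]'hilen) t' x₁ b ∧
          (∀ w ∈ ρ₁, w ∈ U ∪ R.toFinset ∪ R₂.toFinset) ∧
          PCP G col ρ₂ (R₂[i]'hilen) t' x₂ b ∧
          (∀ w ∈ ρ₂, w ∈ U ∪ R.toFinset ∪ R₂.toFinset) := by
      intro ys σ hσ hσU hys
      have hτ := glue hsym hbs hσ (fun hcon => hys hcon.symm)
        (fun w hw hwσ => hbspos w hw (hσU w hwσ))
      have hfull := glue hsym hτ hR (fun hcon => haR hcon.symm) ?_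
      · refine ⟨col (R₂[i]'hilen) (R₂[i+1]'(by omega)),
          col (R₂[i]'hilen) (R₂[i-1]'(by omega)),
          R₂.drop i,
          (((R₂.take (i+1)).reverse).take (j+2) ++ σ.drop 1) ++ R.drop 1, hxx, h1, ?_,
          hfull, ?_⟩
        · exact fun w hw => hmap w (Or.inr (Or.inr (List.mem_of_mem_drop hw)))
        · intro w hw
          rcases List.mem_append.mp hw with hw' | hw'
          · rcases List.mem_append.mp hw' with hw'' | hw''
            · exact hmap w (Or.inr (Or.inr (hbsmem w hw'')))
            · exact hmap w (Or.inl (hσU w (List.mem_of_mem_drop hw'')))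
          · exact hmap w (Or.inr (Or.inl (List.mem_of_mem_drop hw')))
      · intro w hw hwR
        rcases List.mem_append.mp hw with hw' | hw'
        · rcases hdisj w hwR (hbsmem w hw') with rfl | rfl
          · rfl
          · exact absurd hw' ht'bs
        · exact hmemR w hwR (hσU w (List.mem_of_mem_drop hw'))
    by_cases hd : y₁ = col (((R₂.take (i+1)).reverse)[j+1]'hjlen)
        (((R₂.take (i+1)).reverse)[j]'(by omega))
    · exact key y₂ σ₂ g2 g2U (fun hcon => hyy (hd ▸ hcon ▸ rfl))
    · exact key y₁ σ₁ g1 g1U hd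


theorem step (hsym : ∀ u v, col u v = col v u)
    (h : ∀ v : V, ∃ (v' : V) (P Q : List V) (α₁ β₁ α₂ β₂ : γ),
      IsPCPath G col P ∧ IsPCPath G col Q ∧
      HasChar col P v α₁ β₁ v' ∧ HasChar col Q v α₂ β₂ v' ∧
      α₁ ≠ α₂ ∧ ∀ w, w ∈ P → w ∈ Q → w = v ∨ w = v')
    {U : Finset V} {t : V} {β : γ} (inv : Inv G col U t β) :
    (∃ C, IsPCCycle G col C) ∨
    ∃ (U' : Finset V) (t'' : V) (β' : γ), Inv G col U' t'' β' ∧ U ⊂ U' := by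
  classical
  rcases probes hsym h t with hc | ⟨t', P, Q, a₁, a₂, b, ha, hP, hQ, hdisj⟩
  · exact Or.inl hc
  by_cases hhitP : ∃ w ∈ P.drop 1, w ∈ U
  · by_cases ha₁ : a₁ = β
    · -- then a₂ ≠ β ; the probe Q either hits U (win) or avoids it (grow)
      have ha₂ : a₂ ≠ β := fun hcon => ha (ha₁ ▸ hcon ▸ rfl)
      by_cases hhitQ : ∃ w ∈ Q.drop 1, w ∈ U
      · exact Or.inl (win hsym inv hQ ha₂ hhitQ)
      · push_neg at hhitQ
        exact Or.inr (grow hsym inv hQ hP ha.symm ha₂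
          (fun w hw hw' => hdisj w hw' hw) hhitQ)
    · exact Or.inl (win hsym inv hP ha₁ hhitP)
  · push_neg at hhitP
    by_cases ha₁ : a₁ = β
    · -- a₂ ≠ β ; if Q hits U we win, else grow with Q as the good probe
      have ha₂ : a₂ ≠ β := fun hcon => ha (ha₁ ▸ hcon ▸ rfl)
      by_cases hhitQ : ∃ w ∈ Q.drop 1, w ∈ U
      · exact Or.inl (win hsym inv hQ ha₂ hhitQ)
      · push_neg at hhitQ
        exact Or.inr (grow hsym inv hQ hP ha.symm ha₂
          (fun w hw hw' => hdisj w hw' hw) hhitQ)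
    · exact Or.inr (grow hsym inv hP hQ ha ha₁ hdisj hhitP)

theorem base (hsym : ∀ u v, col u v = col v u)
    (h : ∀ v : V, ∃ (v' : V) (P Q : List V) (α₁ β₁ α₂ β₂ : γ),
      IsPCPath G col P ∧ IsPCPath G col Q ∧
      HasChar col P v α₁ β₁ v' ∧ HasChar col Q v α₂ β₂ v' ∧
      α₁ ≠ α₂ ∧ ∀ w, w ∈ P → w ∈ Q → w = v ∨ w = v') (v₀ : V) :
    (∃ C, IsPCCycle G col C) ∨
    ∃ (U : Finset V) (t : V) (β : γ), Inv G col U t β := by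
  classical
  rcases probes hsym h v₀ with hc | ⟨t', P, Q, a₁, a₂, b, ha, hP, hQ, hdisj⟩
  · exact Or.inl hc
  refine Or.inr ⟨P.toFinset ∪ Q.toFinset, t', b,
    Finset.mem_union_left _ (List.mem_toFinset.mpr (hP.lst ▸ List.getElem_mem _)), ?_⟩
  intro s hsU hst'
  have hmap : ∀ w : V, (w ∈ P ∨ w ∈ Q) → w ∈ P.toFinset ∪ Q.toFinset := by
    intro w hw
    rcases hw with h' | h'
    · exact Finset.mem_union_left _ (List.mem_toFinset.mpr h')
    · exact Finset.mem_union_right _ (List.mem_toFinset.mpr h')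
  rcases Finset.mem_union.mp hsU with hs | hs
  · obtain ⟨x₁, x₂, ρ₁, ρ₂, hxx, h1, h1m, h2, h2m⟩ :=
      two_fan hsym hP hQ ha hdisj (List.mem_toFinset.mp hs) hst'
    exact ⟨x₁, x₂, ρ₁, ρ₂, hxx, h1, fun w hw => hmap w (h1m w hw),
      h2, fun w hw => hmap w (h2m w hw)⟩
  · obtain ⟨x₁, x₂, ρ₁, ρ₂, hxx, h1, h1m, h2, h2m⟩ :=
      two_fan hsym hQ hP ha.symm (fun w hw hw' => (hdisj w hw' hw))
        (List.mem_toFinset.mp hs) hst'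
    exact ⟨x₁, x₂, ρ₁, ρ₂, hxx, h1, fun w hw => hmap w (h1m w hw).symm,
      h2, fun w hw => hmap w (h2m w hw).symm⟩

theorem main_loop [Fintype V] (hsym : ∀ u v, col u v = col v u)
    (h : ∀ v : V, ∃ (v' : V) (P Q : List V) (α₁ β₁ α₂ β₂ : γ),
      IsPCPath G col P ∧ IsPCPath G col Q ∧
      HasChar col P v α₁ β₁ v' ∧ HasChar col Q v α₂ β₂ v' ∧
      α₁ ≠ α₂ ∧ ∀ w, w ∈ P → w ∈ Q → w = v ∨ w = v') :
    ∀ (k : ℕ) (U : Finset V) (t : V) (β : γ), Inv G col U t β →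
      Fintype.card V ≤ U.card + k → ∃ C, IsPCCycle G col C := by
  intro k
  induction k with
  | zero =>
    intro U t β inv hcard
    rcases step hsym h inv with hc | ⟨U', t'', β', inv', hss⟩
    · exact hc
    · exfalso
      have h1 := Finset.card_lt_card hss
      have h2 := Finset.card_le_univ U'
      omega
  | succ k ih =>
    intro U t β inv hcard
    rcases step hsym h inv with hc | ⟨U', t'', β', inv', hss⟩
    · exact hc
    · exact ih U' t'' β' inv' (by have := Finset.card_lt_card hss; omega)

end PCAux


/-- **Theorem 4.** If in an edge-colored graph `G` every vertex `v` admits a vertex `v'`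
and two internally vertex-disjoint PC paths from `v` to `v'` whose first edges at `v`
have distinct colors, then `G` contains a PC cycle. -/
theorem stmt3 {V γ : Type*} [Fintype V] [Nonempty V]
    (G : SimpleGraph V) (col : V → V → γ) (hsym : ∀ u v, col u v = col v u)
    (h : ∀ v : V, ∃ (v' : V) (P Q : List V) (α₁ β₁ α₂ β₂ : γ),
      IsPCPath G col P ∧ IsPCPath G col Q ∧
      HasChar col P v α₁ β₁ v' ∧ HasChar col Q v α₂ β₂ v' ∧
      α₁ ≠ α₂ ∧ ∀ w, w ∈ P → w ∈ Q → w = v ∨ w = v') :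
    ∃ C : List V, IsPCCycle G col C := by
  rcases PCAux.base hsym h (Classical.arbitrary V) with hc | ⟨U, t, β, inv⟩
  · exact hc
  · exact PCAux.main_loop hsym h (Fintype.card V) U t β inv (by omega)
end

section
/- Let H be an edge-colored complete graph containing no properly colored cycle. Then there exists a vertex z ∈ V(H) such that for every vertex w ≠ z and every PC path P from z to w, the color of the first edge of P (the edge at z) equals col(zw), the color of the edge joining z and w. -/
lemma infix5' {V : Type*} {x y z a b c d e : V} (h : [x,y,z] <:+: [a,b,c,d,e]) :
    (x=a∧y=b∧z=c) ∨ (x=b∧y=c∧z=d) ∨ (x=c∧y=d∧z=e) := by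
  obtain ⟨s, t, hst⟩ := h
  match s with
  | [] => simp at hst; tauto
  | [s1] => simp at hst; tauto
  | [s1,s2] => simp at hst; tauto
  | s1::s2::s3::ss =>
    have := congrArg List.length hst
    simp at this; omega

lemma infix6' {V : Type*} {x y z a b c d e f : V} (h : [x,y,z] <:+: [a,b,c,d,e,f]) :
    (x=a∧y=b∧z=c) ∨ (x=b∧y=c∧z=d) ∨ (x=c∧y=d∧z=e) ∨ (x=d∧y=e∧z=f) := by
  obtain ⟨s, t, hst⟩ := h
  match s with
  | [] => simp at hst; tauto
  | [s1] => simp at hst; tauto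
  | [s1,s2] => simp at hst; tauto
  | [s1,s2,s3] => simp at hst; tauto
  | s1::s2::s3::s4::ss =>
    have := congrArg List.length hst
    simp at this; omega

lemma pc3 {V γ : Type*} {col : V → V → γ}
    (hnoPC : ∀ l : List V, ¬ IsPCCycle (⊤ : SimpleGraph V) col l)
    {a b c : V} (hab : a ≠ b) (hbc : b ≠ c) (hac : a ≠ c)
    (h1 : col a b ≠ col b c) (h2 : col b c ≠ col c a) (h3 : col c a ≠ col a b) : False := by
  apply hnoPC [a, b, c]
  refine ⟨by simp, by simp [hab, hbc, hac], ?_, ?_⟩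
  · simp [List.Chain', List.isChain_cons_cons, hab, hbc, hac.symm, hab.symm]
  · intro x y w hinf
    simp only [List.take, List.cons_append, List.nil_append] at hinf ⊢
    rcases infix5' hinf with ⟨rfl,rfl,rfl⟩|⟨rfl,rfl,rfl⟩|⟨rfl,rfl,rfl⟩ <;> assumption

lemma pc4 {V γ : Type*} {col : V → V → γ}
    (hnoPC : ∀ l : List V, ¬ IsPCCycle (⊤ : SimpleGraph V) col l)
    {a b c d : V} (hab : a ≠ b) (hac : a ≠ c) (had : a ≠ d) (hbc : b ≠ c) (hbd : b ≠ d)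
    (hcd : c ≠ d)
    (h1 : col a b ≠ col b c) (h2 : col b c ≠ col c d) (h3 : col c d ≠ col d a)
    (h4 : col d a ≠ col a b) : False := by
  apply hnoPC [a, b, c, d]
  refine ⟨by simp, by simp [hab, hac, had, hbc, hbd, hcd], ?_, ?_⟩
  · simp [List.Chain', List.isChain_cons_cons, hab, hbc, hcd, had.symm, hab.symm]
  · intro x y w hinf
    simp only [List.take, List.cons_append, List.nil_append] at hinf ⊢
    rcases infix6' hinf with ⟨rfl,rfl,rfl⟩|⟨rfl,rfl,rfl⟩|⟨rfl,rfl,rfl⟩|⟨rfl,rfl,rfl⟩ <;>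
      assumption

lemma mono_lemma {V γ : Type*} (col : V → V → γ) (hsym : ∀ u v, col u v = col v u)
    (hnoPC : ∀ l : List V, ¬ IsPCCycle (⊤ : SimpleGraph V) col l) :
    ∀ s : Finset V, s.Nonempty →
      ∃ z ∈ s, ∀ u ∈ s, u ≠ z → ∀ u' ∈ s, u' ≠ z → col z u = col z u' := by
  classical
  intro s
  induction s using Finset.strongInduction with
  | _ s ih =>
  intro hne
  by_cases hcard : s.card ≤ 2
  · obtain ⟨z, hz⟩ := hne
    refine ⟨z, hz, fun u hu hu' u' hu'2 hu'3 => ?_⟩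
    have : u = u' := by
      by_contra hne'
      have hsub : ({z, u, u'} : Finset V) ⊆ s := by
        intro x hx; simp at hx; rcases hx with rfl|rfl|rfl <;> assumption
      have h3 : ({z, u, u'} : Finset V).card = 3 := by
        rw [Finset.card_insert_of_notMem (by simp [Ne.symm hu', Ne.symm hu'3]),
            Finset.card_insert_of_notMem (by simp [hne']), Finset.card_singleton]
      have := Finset.card_le_card hsub
      omega
    rw [this]
  · push_neg at hcard
    obtain ⟨v, hv⟩ := hne
    -- IH on s.erase v
    have hev : (s.erase v).card = s.card - 1 := Finset.card_erase_of_mem hv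
    have hevne : (s.erase v).Nonempty := Finset.card_pos.mp (by omega)
    obtain ⟨z, hz, hzmono⟩ := ih (s.erase v) (Finset.erase_ssubset hv) hevne
    have hzs : z ∈ s := Finset.mem_of_mem_erase hz
    have hzv : z ≠ v := Finset.ne_of_mem_erase hz
    obtain ⟨u0, hu0, hu0z⟩ := Finset.exists_mem_ne (s := s.erase v) (by omega) z
    set c := col z u0 with hc
    have hzc : ∀ u ∈ s.erase v, u ≠ z → col z u = c :=
      fun u hu hune => hzmono u hu hune u0 hu0 hu0z
    by_cases hcv : col z v = c
    · -- z is monochromatic on s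
      have key : ∀ u ∈ s, u ≠ z → col z u = c := by
        intro u hu hune
        by_cases huv : u = v
        · rw [huv]; exact hcv
        · exact hzc u (Finset.mem_erase.mpr ⟨huv, hu⟩) hune
      exact ⟨z, hzs, fun u hu hune u' hu' hune' => by rw [key u hu hune, key u' hu' hune']⟩
    · set d := col z v with hd
      have hdc : d ≠ c := hcv
      -- IH on s.erase z
      have hez : (s.erase z).card = s.card - 1 := Finset.card_erase_of_mem hzs
      have hezne : (s.erase z).Nonempty := Finset.card_pos.mp (by omega)
      obtain ⟨z', hz', hz'mono⟩ := ih (s.erase z) (Finset.erase_ssubset hzs) hezne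
      have hz's : z' ∈ s := Finset.mem_of_mem_erase hz'
      have hz'z : z' ≠ z := Finset.ne_of_mem_erase hz'
      obtain ⟨w0, hw0, hw0z'⟩ := Finset.exists_mem_ne (s := s.erase z) (by omega) z'
      set e := col z' w0 with he
      have hw0s : w0 ∈ s := Finset.mem_of_mem_erase hw0
      have hw0z : w0 ≠ z := Finset.ne_of_mem_erase hw0
      have hz'c : ∀ u ∈ s.erase z, u ≠ z' → col z' u = e :=
        fun u hu hune => hz'mono u hu hune w0 hw0 hw0z'
      by_cases hz'v : z' = v
      · subst hz'v
        -- now v has been replaced by z' everywhere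
        have hczw0 : col z w0 = c := hzc w0 (Finset.mem_erase.mpr ⟨hw0z', hw0s⟩) hw0z
        -- triangle z z' w0 : d, e, c with d ≠ c
        have hedc : e = d ∨ e = c := by
          by_contra hcon
          push_neg at hcon
          exact pc3 hnoPC hzv (Ne.symm hw0z') hw0z.symm
            (show col z z' ≠ col z' w0 by rw [← hd, ← he]; exact fun h => hcon.1 h.symm)
            (show col z' w0 ≠ col w0 z by rw [hsym w0 z, hczw0, ← he]; exact hcon.2)
            (show col w0 z ≠ col z z' by rw [hsym w0 z, hczw0, ← hd]; exact fun h => hdc h.symm)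
        rcases hedc with hed | hec
        · -- v monochromatic with color d
          have key : ∀ u ∈ s, u ≠ z' → col z' u = d := by
            intro u hu hune
            by_cases huz : u = z
            · rw [huz, hsym, ← hd]
            · rw [hz'c u (Finset.mem_erase.mpr ⟨huz, hu⟩) hune]; exact hed
          exact ⟨z', hz's, fun u hu hune u' hu' hune' => by
            rw [key u hu hune, key u' hu' hune']⟩
        · -- e = c; w0 monochromatic with color c
          have key : ∀ u ∈ s, u ≠ w0 → col w0 u = c := by
            intro u hu hune
            by_cases huz : u = z
            · rw [huz, hsym, hczw0]
            by_cases huv : u = z'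
            · rw [huv, hsym, ← he, hec]
            -- u ∉ {z, z', w0}
            have hcu : col z u = c := hzc u (Finset.mem_erase.mpr ⟨huv, hu⟩) huz
            by_contra hcon
            -- PC 4-cycle z', w0, u, z
            refine pc4 hnoPC (Ne.symm hw0z') (fun h => huv h.symm) hz'z
              (fun h => hune h.symm) hw0z huz ?_ ?_ ?_ ?_
            · rw [← he, hec]; exact fun h => hcon h.symm
            · rw [hsym u z, hcu]; exact hcon
            · rw [hsym u z, hcu, ← hd]; exact fun h => hdc h.symm
            · rw [← hd, ← he, hec]; exact hdc
          exact ⟨w0, hw0s, fun u hu hune u' hu' hune' => by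
            rw [key u hu hune, key u' hu' hune']⟩
      · -- z' ≠ v
        have hz'ev : z' ∈ s.erase v := Finset.mem_erase.mpr ⟨hz'v, hz's⟩
        have hcz' : col z z' = c := hzc z' hz'ev hz'z
        by_cases hec : e = c
        · -- z' monochromatic with color c
          have key : ∀ u ∈ s, u ≠ z' → col z' u = c := by
            intro u hu hune
            by_cases huz : u = z
            · rw [huz, hsym, hcz']
            · rw [hz'c u (Finset.mem_erase.mpr ⟨huz, hu⟩) hune, hec]
          exact ⟨z', hz's, fun u hu hune u' hu' hune' => by
            rw [key u hu hune, key u' hu' hune']⟩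
        · -- e ≠ c; triangle z v z' forces e = d
          have hvz' : col z' v = e :=
            hz'c v (Finset.mem_erase.mpr ⟨Ne.symm hzv, hv⟩) (fun h => hz'v h.symm)
          have hed : e = d := by
            by_contra hned
            exact pc3 hnoPC hzv (fun h => hz'v h.symm) (Ne.symm hz'z)
              (show col z v ≠ col v z' by rw [hsym v z', hvz', ← hd]; exact fun h => hned h.symm)
              (show col v z' ≠ col z' z by rw [hsym v z', hvz', hsym z' z, hcz']; exact hec)
              (show col z' z ≠ col z v by rw [hsym z' z, hcz', ← hd]; exact fun h => hdc h.symm)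
          -- v monochromatic with color d
          have key : ∀ u ∈ s, u ≠ v → col v u = d := by
            intro u hu hune
            by_cases huz : u = z
            · rw [huz, hsym, hd]
            by_cases huz' : u = z'
            · rw [huz', hsym, hvz', hed]
            have hcu' : col z' u = e := hz'c u (Finset.mem_erase.mpr ⟨huz, hu⟩) huz'
            by_contra hcon
            -- PC 4-cycle z, v, u, z'
            refine pc4 hnoPC hzv (fun h => huz h.symm) (Ne.symm hz'z)
              (fun h => hune h.symm) (fun h => hz'v h.symm) huz' ?_ ?_ ?_ ?_
            · rw [← hd]; exact fun h => hcon h.symm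
            · rw [hsym u z', hcu', hed]; exact hcon
            · rw [hsym u z', hcu', hed, hsym z' z, hcz']; exact hdc
            · rw [hsym z' z, hcz', ← hd]; exact fun h => hdc h.symm
          exact ⟨v, hv, fun u hu hune u' hu' hune' => by
            rw [key u hu hune, key u' hu' hune']⟩
/-- If an edge-colored complete graph `H` contains no PC cycle, then there is a vertex `z`
such that for every vertex `w ≠ z` and every PC path from `z` to `w`, the color of the
first edge of the path (at `z`) equals `col(zw)`. -/
theorem stmt7 {V γ : Type*} [Fintype V] [Nonempty V]
    (col : V → V → γ) (hsym : ∀ u v, col u v = col v u)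
    (hnoPC : ∀ l : List V, ¬ IsPCCycle (⊤ : SimpleGraph V) col l) :
    ∃ z : V, ∀ w : V, w ≠ z → ∀ (b : V) (t : List V),
      IsPCPath (⊤ : SimpleGraph V) col (z :: b :: t) →
      (z :: b :: t).getLast? = some w → col z b = col z w := by
  classical
  obtain ⟨z, -, hmono⟩ := mono_lemma col hsym hnoPC Finset.univ Finset.univ_nonempty
  refine ⟨z, fun w hw b t hpath _ => ?_⟩
  have hbz : b ≠ z := by
    have hnd : (z :: b :: t).Nodup := hpath.2.1
    simp only [List.nodup_cons, List.mem_cons] at hnd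
    exact fun h => hnd.1 (Or.inl h.symm)
  exact hmono b (Finset.mem_univ b) hbz w (Finset.mem_univ w) hw
end

section
/- Let {P, C} be a PC 1-path-cycle factor of an edge-colored complete graph G, where the PC path P runs from u to u' with first edge at u of color x, and C is a PC cycle (of length at least 3). If there exists a vertex v ∈ V(C) with col(uv) ≠ x, then G contains a PC Hamilton path. -/
/- ---------------- auxiliary lemmas ---------------- -/

lemma mem_of_getLast?' {α : Type*} {l : List α} {a : α} (h : l.getLast? = some a) : a ∈ l := by
  cases l with
  | nil => simp at h
  | cons x t =>
    have h' : (x :: t).getLast (by simp) = a := by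
      rwa [List.getLast?_eq_getLast_of_ne_nil (by simp), Option.some_inj] at h
    exact h' ▸ List.getLast_mem _

lemma triple_infix_append {α : Type*} {a b c : α} {l₁ l₂ : List α}
    (h : [a, b, c] <:+: l₁ ++ l₂) :
    [a, b, c] <:+: l₁ ∨ [a, b, c] <:+: l₂ ∨
      (∃ s, l₁ = s ++ [a, b] ∧ ∃ t, l₂ = c :: t) ∨
      (∃ s, l₁ = s ++ [a] ∧ ∃ t, l₂ = b :: c :: t) := by
  induction l₁ with
  | nil => right; left; simpa using h
  | cons x l ih =>
    rw [List.cons_append, List.infix_cons_iff] at h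
    rcases h with h | h
    · obtain ⟨r, hr⟩ := h
      simp only [List.cons_append, List.nil_append] at hr
      injection hr with h1 h2
      subst h1
      rcases l with _ | ⟨d, _ | ⟨e, l'⟩⟩
      · right; right; right
        exact ⟨[], by simp, r, by simpa using h2.symm⟩
      · simp only [List.cons_append, List.nil_append] at h2
        injection h2 with h3 h4
        subst h3
        right; right; left
        exact ⟨[], by simp, r, h4.symm⟩
      · simp only [List.cons_append] at h2
        injection h2 with h3 h4
        injection h4 with h5 h6
        subst h3; subst h5
        left
        exact ⟨[], l', by simp⟩
    · rcases ih h with h' | h' | ⟨s, hs, t, ht⟩ | ⟨s, hs, t, ht⟩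
      · exact Or.inl (List.infix_cons h')
      · exact Or.inr (Or.inl h')
      · exact Or.inr (Or.inr (Or.inl ⟨x :: s, by simp [hs], t, ht⟩))
      · exact Or.inr (Or.inr (Or.inr ⟨x :: s, by simp [hs], t, ht⟩))

lemma IsPCPath.rev {V γ : Type*} {col : V → V → γ} (hsym : ∀ u v, col u v = col v u)
    {l : List V} (h : IsPCPath (⊤ : SimpleGraph V) col l) :
    IsPCPath (⊤ : SimpleGraph V) col l.reverse := by
  obtain ⟨h0, h1, h2, h3⟩ := h
  refine ⟨by simpa using h0, by simpa using h1, ?_, ?_⟩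
  · refine List.isChain_reverse.2 ?_
    exact h2.imp fun a b hab => hab.symm
  · intro a b c hinf
    have h4 : [c, b, a] <:+: l := by
      apply List.reverse_infix.1
      simpa using hinf
    have h5 := h3 c b a h4
    rw [hsym a b, hsym b c]
    exact fun e => h5 e.symm

lemma IsPCCycle.rot1 {V γ : Type*} {col : V → V → γ} {x : V} {l : List V}
    (h : IsPCCycle (⊤ : SimpleGraph V) col (x :: l)) :
    IsPCCycle (⊤ : SimpleGraph V) col (l ++ [x]) := by
  obtain ⟨h0, h1, h2, h3⟩ := h
  rcases l with _ | ⟨y, _ | ⟨z, l'⟩⟩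
  · simp at h0
  · simp at h0
  have hS : (x :: y :: z :: l') ++ (x :: y :: z :: l').take 2
      = x :: ((y :: z :: l' ++ [x]) ++ [y]) := by simp
  rw [hS] at h2 h3
  have hT : (y :: z :: l' ++ [x]) ++ ((y :: z :: l' ++ [x]).take 2)
      = ((y :: z :: l' ++ [x]) ++ [y]) ++ [z] := by simp
  have hyz : y ≠ z := by
    have := h1; simp only [List.nodup_cons, List.mem_cons] at this; tauto
  refine ⟨by simpa using h0, ?_, ?_, ?_⟩
  · exact (List.perm_append_singleton x (y :: z :: l')).nodup_iff.mpr h1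
  · rw [hT]
    refine List.isChain_append.2 ⟨h2.tail, by simp, ?_⟩
    intro p hp q hq
    rw [List.getLast?_concat] at hp
    simp only [List.head?_cons, Option.mem_some_iff] at hp hq
    subst hp; subst hq
    simpa using hyz
  · intro a b cc hinf
    rw [hT] at hinf
    rcases triple_infix_append hinf with h' | h' | ⟨s, hs, t, ht⟩ | ⟨s, hs, t, ht⟩
    · exact h3 a b cc (List.infix_cons h')
    · have := h'.length_le; simp at this
    · injection ht with ht1 ht2
      subst ht1
      have hs' : ((y :: z :: l' ++ [x]) ++ [y]) = (s ++ [a]) ++ [b] := by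
        rw [hs]; simp
      have hb : b = y := by
        have := congrArg List.getLast? hs'
        rw [List.getLast?_concat, List.getLast?_concat] at this
        exact (Option.some_inj.1 this).symm
      have hsa : (y :: z :: l' ++ [x]) = s ++ [a] := by
        have := congrArg List.dropLast hs'
        rwa [List.dropLast_concat, List.dropLast_concat] at this
      have ha : a = x := by
        have hsa' : ((y :: z :: l') ++ [x]) = s ++ [a] := by rw [← hsa]
        have := congrArg List.getLast? hsa'
        rw [List.getLast?_concat, List.getLast?_concat] at this
        exact (Option.some_inj.1 this).symm
      rw [ha, hb]
      exact h3 x y z ⟨[], l' ++ [x, y], by simp⟩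
    · simp at ht

lemma IsPCCycle.rotN {V γ : Type*} {col : V → V → γ} {c : List V}
    (h : IsPCCycle (⊤ : SimpleGraph V) col c) (n : ℕ) :
    IsPCCycle (⊤ : SimpleGraph V) col (c.rotate n) := by
  induction n with
  | zero => simpa using h
  | succ n ih =>
    rcases e : c.rotate n with _ | ⟨x, l⟩
    · exfalso
      have h1 := ih.1
      rw [e] at h1; simp at h1
    · have h1 : c.rotate (n + 1) = l ++ [x] := by
        rw [← List.rotate_rotate, e]
        rw [show (1 : ℕ) = 0 + 1 from rfl, List.rotate_cons_succ, List.rotate_zero]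
      rw [h1]
      exact (e ▸ ih).rot1

lemma glue {V γ : Type*} {col : V → V → γ} {D P : List V} {v u : V}
    (hD : IsPCPath (⊤ : SimpleGraph V) col D) (hP : IsPCPath (⊤ : SimpleGraph V) col P)
    (hlast : D.getLast? = some v) (hhead : P.head? = some u)
    (hdisj : D.Disjoint P)
    (h1 : ∀ s a, D = s ++ [a, v] → col a v ≠ col v u)
    (h2 : ∀ b t, P = u :: b :: t → col v u ≠ col u b) :
    IsPCPath (⊤ : SimpleGraph V) col (D ++ P) := by
  obtain ⟨hD0, hD1, hD2, hD3⟩ := hD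
  obtain ⟨hP0, hP1, hP2, hP3⟩ := hP
  have hvD : v ∈ D := mem_of_getLast?' hlast
  have huP : u ∈ P := List.mem_of_mem_head? (by rw [hhead]; simp)
  have hvu : v ≠ u := fun h => hdisj hvD (h ▸ huP)
  refine ⟨by simp [hD0], List.nodup_append.2 ⟨hD1, hP1, fun a ha b hb hab => hdisj ha (hab ▸ hb)⟩, ?_, ?_⟩
  · refine List.isChain_append.2 ⟨hD2, hP2, ?_⟩
    intro p hp q hq
    rw [hlast] at hp; rw [hhead] at hq
    simp only [Option.mem_some_iff] at hp hq
    subst hp; subst hq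
    simpa using hvu
  · intro a b cc hinf
    rcases triple_infix_append hinf with h' | h' | ⟨s, hs, t, ht⟩ | ⟨s, hs, t, ht⟩
    · exact hD3 a b cc h'
    · exact hP3 a b cc h'
    · have hb : b = v := by
        have h' : D = (s ++ [a]) ++ [b] := by rw [hs]; simp
        rw [h', List.getLast?_concat] at hlast
        exact Option.some_inj.1 hlast
      have hcc : cc = u := by
        rw [ht] at hhead; simp only [List.head?_cons, Option.some_inj] at hhead
        exact hhead
      subst hb; subst hcc
      exact h1 s a hs
    · have ha : a = v := by
        rw [hs, List.getLast?_concat] at hlast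
        exact Option.some_inj.1 hlast
      have hb : b = u := by
        rw [ht] at hhead; simp only [List.head?_cons, Option.some_inj] at hhead
        exact hhead
      subst ha; subst hb
      exact h2 cc t ht

/-- Let `{P, C}` be a PC 1-path-cycle factor of an edge-colored complete graph, where the
PC path `P` runs from `u` to `u'` with first edge of color `x` and `C` is a PC cycle. If
some `v ∈ V(C)` satisfies `col(uv) ≠ x`, then there is a PC Hamilton path. -/
theorem stmt8 {V γ : Type*} [Fintype V]
    (col : V → V → γ) (hsym : ∀ u v, col u v = col v u)
    (P c : List V) (u u' : V) (x : γ)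
    (hP : IsPCPath (⊤ : SimpleGraph V) col P)
    (hC : IsPCCycle (⊤ : SimpleGraph V) col c)
    (hstart : ∃ b t, P = u :: b :: t ∧ col u b = x)
    (hend : P.getLast? = some u')
    (hdisj : ∀ w, w ∈ P → w ∉ c)
    (hspan : ∀ w : V, w ∈ P ∨ w ∈ c)
    (hv : ∃ v ∈ c, col u v ≠ x) :
    ∃ Q : List V, IsPCPath (⊤ : SimpleGraph V) col Q ∧ ∀ w : V, w ∈ Q := by
  obtain ⟨v, hvc, hcolv⟩ := hv
  obtain ⟨l1, l2, hc⟩ := List.append_of_mem hvc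
  -- rotate the cycle so that `v` is first
  have hlen : l1.length ≤ c.length := by rw [hc]; simp
  have hrot : c.rotate l1.length = v :: (l2 ++ l1) := by
    rw [List.rotate_eq_drop_append_take hlen]
    conv_lhs => rw [hc]
    rw [show l1 ++ v :: l2 = l1 ++ (v :: l2) from rfl, List.drop_left, List.take_left]
    simp
  have hC' : IsPCCycle (⊤ : SimpleGraph V) col (v :: (l2 ++ l1)) := hrot ▸ hC.rotN l1.length
  have hmem' : ∀ w : V, w ∈ v :: (l2 ++ l1) ↔ w ∈ c := by
    intro w; rw [← hrot]; exact List.mem_rotate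
  -- destructure the rest of the cycle
  obtain ⟨w, R, hR⟩ : ∃ w R, l2 ++ l1 = w :: R := by
    rcases e : l2 ++ l1 with _ | ⟨w, R⟩
    · exfalso; have := hC'.1; rw [e] at this; simp at this
    · exact ⟨w, R, rfl⟩
  rw [hR] at hC' hmem'
  obtain ⟨hlen3, hnd, hch, htr⟩ := hC'
  have hSeq : (v :: w :: R) ++ (v :: w :: R).take 2 = v :: ((w :: R) ++ [v, w]) := by simp
  rw [hSeq] at hch htr
  set e : V := (w :: R).getLast (by simp) with he
  have hsplit : (w :: R).dropLast ++ [e] = w :: R := List.dropLast_append_getLast (by simp)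
  -- the two cycle edges at v have different colors
  have F1 : col e v ≠ col v w := by
    apply htr
    refine ⟨v :: (w :: R).dropLast, [], ?_⟩
    have : (w :: R).dropLast ++ ([e, v, w]) = (w :: R) ++ [v, w] := by
      rw [show (w :: R).dropLast ++ [e, v, w] = ((w :: R).dropLast ++ [e]) ++ [v, w] by simp,
        hsplit]
    simp only [List.cons_append, List.append_nil]
    rw [show ([e, v, w] : List V) = [e] ++ [v, w] from rfl]
    rw [show (w :: R).dropLast ++ ([e] ++ [v, w]) = ((w :: R).dropLast ++ [e]) ++ [v, w] by simp,
      hsplit]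
    rfl
  -- the cycle as a path starting at v
  have hc'path : IsPCPath (⊤ : SimpleGraph V) col (v :: w :: R) := by
    have hpre : (v :: w :: R) <:+: v :: ((w :: R) ++ [v, w]) :=
      ⟨[], [v, w], by simp⟩
    exact ⟨by simp, hnd, hch.infix hpre, fun a b cc hinf => htr a b cc (hinf.trans hpre)⟩
  -- path D₁ = (w :: R) ++ [v]
  have hD1inf : ((w :: R) ++ [v]) <:+: v :: ((w :: R) ++ [v, w]) :=
    ⟨[v], [w], by simp⟩
  have hD1 : IsPCPath (⊤ : SimpleGraph V) col ((w :: R) ++ [v]) := by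
    refine ⟨by simp, ?_, hch.infix hD1inf, fun a b cc hinf => htr a b cc (hinf.trans hD1inf)⟩
    exact (List.perm_append_singleton v (w :: R)).nodup_iff.mpr hnd
  -- path D₂ = reverse of the cycle-path
  have hD2 : IsPCPath (⊤ : SimpleGraph V) col ((v :: w :: R).reverse) := hc'path.rev hsym
  obtain ⟨b₀, t₀, hPeq, hcolb₀⟩ := hstart
  -- choose the direction
  by_cases hcase : col e v = col v u
  · -- use D₂; its last edge has color col w v = col v w ≠ col v u
    refine ⟨(v :: w :: R).reverse ++ P, ?_, ?_⟩
    · apply glue (v := v) (u := u) hD2 hP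
      · rw [show (v :: w :: R).reverse = (w :: R).reverse ++ [v] by simp, List.getLast?_concat]
      · rw [hPeq]; simp
      · intro a ha hap
        apply hdisj a hap
        rw [← hmem' a]
        exact List.mem_reverse.1 ha
      · intro s a hsa
        have h1 : (w :: R).reverse ++ [v] = (s ++ [a]) ++ [v] := by
          rw [show (s ++ [a]) ++ [v] = s ++ [a, v] by simp, ← hsa]; simp
        have h2 : (w :: R).reverse = s ++ [a] := by
          have := congrArg List.dropLast h1
          rwa [List.dropLast_concat, List.dropLast_concat] at this
        have h3 : R.reverse ++ [w] = s ++ [a] := by rw [← h2]; simp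
        have ha' : a = w := by
          have := congrArg List.getLast? h3
          rw [List.getLast?_concat, List.getLast?_concat] at this
          exact (Option.some_inj.1 this).symm
        rw [ha', hsym w v]
        intro hcon
        exact F1 (hcase.trans hcon.symm)
      · intro b t hbt
        rw [hPeq] at hbt
        injection hbt with _ hbt'
        injection hbt' with hb _
        subst hb
        rw [hsym v u, hcolb₀]
        exact hcolv
    · intro q
      rcases hspan q with h | h
      · simp [h]
      · rw [← hmem' q] at h
        simp only [List.mem_append, List.mem_reverse]
        exact Or.inl h
  · -- use D₁; its last edge has color col e v ≠ col v u
    refine ⟨((w :: R) ++ [v]) ++ P, ?_, ?_⟩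
    · apply glue (v := v) (u := u) hD1 hP
      · rw [List.getLast?_concat]
      · rw [hPeq]; simp
      · intro a ha hap
        apply hdisj a hap
        rw [← hmem' a]
        simp only [List.mem_append, List.mem_cons, List.mem_singleton] at ha
        simp only [List.mem_cons]
        tauto
      · intro s a hsa
        have h1 : (w :: R) ++ [v] = (s ++ [a]) ++ [v] := by rw [hsa]; simp
        have h2 : (w :: R) = s ++ [a] := by
          have := congrArg List.dropLast h1
          rwa [List.dropLast_concat, List.dropLast_concat] at this
        have ha' : a = e := by
          have h3 : (w :: R).dropLast ++ [e] = s ++ [a] := by rw [hsplit, h2]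
          have := congrArg List.getLast? h3
          rw [List.getLast?_concat, List.getLast?_concat] at this
          exact (Option.some_inj.1 this).symm
        subst ha'
        exact hcase
      · intro b t hbt
        rw [hPeq] at hbt
        injection hbt with _ hbt'
        injection hbt' with hb _
        subst hb
        rw [hsym v u, hcolb₀]
        exact hcolv
    · intro q
      rcases hspan q with h | h
      · simp [h]
      · rw [← hmem' q] at h
        simp only [List.mem_cons] at h
        simp only [List.cons_append, List.mem_append, List.mem_cons, List.mem_singleton]
        tauto
end

section
/- Let C_1 and C_2 be vertex-disjoint PC cycles in an edge-colored complete graph G with V(G) = V(C_1) ∪ V(C_2), and suppose there exists an assignment f : V(C_1) → colors such that col(uv) = f(u) or col(uv) = f(v) for all distinct vertices u, v ∈ V(C_1), and col(uw) = f(u) for all u ∈ V(C_1) and w ∈ V(C_2). Then G contains no PC cycle C with V(C) = V(C_1) ∪ V(C_2). -/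

lemma infix_triple {α : Type*} (l : List α) (i : ℕ) (h : i + 2 < l.length) :
    [l[i], l[i+1], l[i+2]] <:+: l := by
  have h0 : i < l.length := by omega
  have h1 : i + 1 < l.length := by omega
  refine ⟨l.take i, l.drop (i+3), ?_⟩
  conv_rhs => rw [← List.take_append_drop i l]
  rw [List.drop_eq_getElem_cons h0, List.drop_eq_getElem_cons h1,
    List.drop_eq_getElem_cons h]
  simp

lemma cyc_prop (n : ℕ) (P : ℕ → Prop) (step : ∀ i < n, P i → P (i+1))
    (wrap : P n → P 0) {j : ℕ} (hj : j ≤ n) (hPj : P j) : ∀ i ≤ n, P i := by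
  have up : ∀ a b, a ≤ b → b ≤ n → P a → P b := by
    intro a b hab hbn hPa
    induction b, hab using Nat.le_induction with
    | base => exact hPa
    | succ b hb ih => exact step b (by omega) (ih (by omega))
  intro i hi
  rcases le_or_gt j i with h | h
  · exact up j i h hi hPj
  · exact up 0 i (Nat.zero_le _) hi (wrap (up j n hj le_rfl hPj))

/-- **Degenerate-set barrier.** Let `C₁` and `C₂` be vertex-disjoint PC cycles spanning an
edge-colored complete graph. If there is `f : V(C₁) → colors` with `col(uv) = f(u)` or
`f(v)` for all distinct `u, v ∈ V(C₁)` and `col(uw) = f(u)` for all `u ∈ V(C₁)`,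
`w ∈ V(C₂)`, then there is no PC cycle `C` with `V(C) = V(C₁) ∪ V(C₂)`. -/
theorem stmt9 {V γ : Type*} [Fintype V]
    (col : V → V → γ) (hsym : ∀ u v, col u v = col v u)
    (c₁ c₂ : List V) (f : V → γ)
    (hC₁ : IsPCCycle (⊤ : SimpleGraph V) col c₁)
    (hC₂ : IsPCCycle (⊤ : SimpleGraph V) col c₂)
    (hdisj : ∀ w, w ∈ c₁ → w ∉ c₂)
    (hspan : ∀ w : V, w ∈ c₁ ∨ w ∈ c₂)
    (hf : ∀ u v, u ∈ c₁ → v ∈ c₁ → u ≠ v → col u v = f u ∨ col u v = f v)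
    (hf' : ∀ u w, u ∈ c₁ → w ∈ c₂ → col u w = f u) :
    ¬ ∃ C : List V, IsPCCycle (⊤ : SimpleGraph V) col C ∧
        ∀ w : V, w ∈ C ↔ (w ∈ c₁ ∨ w ∈ c₂) := by
  rintro ⟨C, ⟨hn3, hnd, hch, hcolC⟩, hmem⟩
  -- pick a vertex of c₁ and of c₂
  obtain ⟨u, hu⟩ := c₁.exists_mem_of_ne_nil (by
    obtain ⟨h, _, _, _⟩ := hC₁; intro he; simp [he] at h)
  obtain ⟨w, hw⟩ := c₂.exists_mem_of_ne_nil (by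
    obtain ⟨h, _, _, _⟩ := hC₂; intro he; simp [he] at h)
  have huC : u ∈ C := (hmem u).2 (Or.inl hu)
  have hwC : w ∈ C := (hmem w).2 (Or.inr hw)
  set n := C.length with hndef
  set L := C ++ C.take 2 with hLdef
  have hlen : L.length = n + 2 := by
    simp [hLdef, List.length_take, ← hndef]; omega
  -- indexing function
  set g : ℕ → V := fun i => L.getD i u with hgdef
  have hg : ∀ i (h : i < n + 2), g i = L[i]'(by omega) :=
    fun i h => L.getD_eq_getElem u (by omega)
  have hgC : ∀ i (h : i < n), g i = C[i]'h := by
    intro i h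
    rw [hg i (by omega)]
    exact List.getElem_append_left h
  have hg0 : g n = g 0 := by
    show (C ++ C.take 2).getD C.length u = (C ++ C.take 2).getD 0 u
    rw [List.getD_append_right _ _ _ _ (le_refl _), List.getD_append _ _ _ _ (by omega)]
    simp
  have hg1 : g (n+1) = g 1 := by
    show (C ++ C.take 2).getD (C.length + 1) u = (C ++ C.take 2).getD 1 u
    rw [List.getD_append_right _ _ _ _ (by omega), List.getD_append _ _ _ _ (by omega)]
    simp
  have hadj : ∀ i, i + 1 < n + 2 → g i ≠ g (i+1) := by
    intro i h
    replace hch : L.IsChain (⊤ : SimpleGraph V).Adj := hch; rw [List.isChain_iff_getElem] at hch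
    have := hch i (by omega)
    rw [SimpleGraph.top_adj] at this
    rw [hg i (by omega), hg (i+1) (by omega)]
    exact this
  have hcol : ∀ i, i < n → col (g i) (g (i+1)) ≠ col (g (i+1)) (g (i+2)) := by
    intro i h
    rw [hg i (by omega), hg (i+1) (by omega), hg (i+2) (by omega)]
    exact hcolC _ _ _ (infix_triple L i (by omega))
  have hidx : ∀ v ∈ C, ∃ i, ∃ h : i < n, g i = v := by
    intro v hv
    obtain ⟨i, h, he⟩ := List.mem_iff_getElem.mp hv
    exact ⟨i, h, by rw [hgC i h]; exact he⟩
  obtain ⟨jw, hjw, hjwv⟩ := hidx w hwC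
  obtain ⟨ju, hju, hjuv⟩ := hidx u huC
  -- Step 1: there is a crossing edge
  have hcross : ∃ i, i < n ∧ g i ∈ c₂ ∧ g (i+1) ∈ c₁ := by
    by_contra hno
    push_neg at hno
    have all2 : ∀ i ≤ n, g i ∈ c₂ := by
      refine cyc_prop n (fun i => g i ∈ c₂) ?_
        (by show g n ∈ c₂ → g 0 ∈ c₂; rw [hg0]; exact id) (le_of_lt hjw)
        (by show g jw ∈ c₂; rw [hjwv]; exact hw)
      intro i hi hgi
      rcases hspan (g (i+1)) with h1 | h2
      · exact absurd h1 (hno i hi hgi)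
      · exact h2
    have : u ∈ c₂ := by rw [← hjuv]; exact all2 ju (le_of_lt hju)
    exact hdisj u hu this
  obtain ⟨i₀, hi₀, hi₀2, hi₀1⟩ := hcross
  -- Step 2: propagate "good" edges around the whole cycle
  set P : ℕ → Prop := fun i => g (i+1) ∈ c₁ ∧ col (g i) (g (i+1)) = f (g (i+1)) with hPdef
  have allP : ∀ i ≤ n, P i := by
    refine cyc_prop n P ?_ ?_ (le_of_lt hi₀) ?_
    · intro i hi hp
      obtain ⟨h1, h2⟩ : g (i+1) ∈ c₁ ∧ col (g i) (g (i+1)) = f (g (i+1)) := hp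
      show g (i+1+1) ∈ c₁ ∧ col (g (i+1)) (g (i+1+1)) = f (g (i+1+1))
      have hne : g (i+1) ≠ g (i+2) := hadj (i+1) (by omega)
      have hne2 : col (g (i+1)) (g (i+2)) ≠ f (g (i+1)) := by
        rw [← h2]; exact (hcol i hi).symm
      rcases hspan (g (i+2)) with hc1 | hc2
      · rcases hf (g (i+1)) (g (i+2)) h1 hc1 hne with he | he
        · exact absurd he hne2
        · exact ⟨hc1, he⟩
      · exact absurd (hf' (g (i+1)) (g (i+2)) h1 hc2) hne2
    · intro hp
      obtain ⟨h1, h2⟩ : g (n+1) ∈ c₁ ∧ col (g n) (g (n+1)) = f (g (n+1)) := hp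
      show g (0+1) ∈ c₁ ∧ col (g 0) (g (0+1)) = f (g (0+1))
      rw [show (0:ℕ)+1 = 1 from rfl]
      rw [hg1] at h1 h2
      rw [hg0] at h2
      exact ⟨h1, h2⟩
    · show g (i₀+1) ∈ c₁ ∧ col (g i₀) (g (i₀+1)) = f (g (i₀+1))
      refine ⟨hi₀1, ?_⟩
      rw [hsym]
      exact hf' (g (i₀+1)) (g i₀) hi₀1 hi₀2
  -- conclude: w ∈ c₁, contradiction
  have hwc1 : w ∈ c₁ := by
    rcases Nat.eq_zero_or_pos jw with h0 | hpos
    · have := (allP (n-1) (by omega)).1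
      rw [show n - 1 + 1 = n by omega, hg0] at this
      rw [← hjwv, h0]; exact this
    · have := (allP (jw-1) (by omega)).1
      rw [show jw - 1 + 1 = jw by omega] at this
      rw [← hjwv]; exact this
  exact hdisj w hwc1 hw
end
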